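/- arXiv:1802.09051 — 7 statements merged into one kernel-verified Lean document; each statement's English description precedes it below -/
import Mathlib

section
/- If G is a connected graph with γ(G) = β(G), then the minimum degree δ(G) is at most 2. -/
open Finset

variable {V : Type} [Fintype V] [DecidableEq V]

def IsDomSet (G : SimpleGraph V) (D : Finset V) : Prop :=
  ∀ v : V, v ∉ D → ∃ u ∈ D, G.Adj u v

noncomputable def domNum (G : SimpleGraph V) : ℕ :=
  sInf {n | ∃ D : Finset V, IsDomSet G D ∧ D.card = n}

def IsVertexCover (G : SimpleGraph V) (C : Finset V) : Prop :=
  ∀ ⦃u v : V⦄, G.Adj u v → u ∈ C ∨ v ∈ C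

noncomputable def coverNum (G : SimpleGraph V) : ℕ :=
  sInf {n | ∃ C : Finset V, IsVertexCover G C ∧ C.card = n}

def IsIndepFinset (G : SimpleGraph V) (I : Finset V) : Prop :=
  ∀ u ∈ I, ∀ v ∈ I, ¬ G.Adj u v

noncomputable def indepNum (G : SimpleGraph V) : ℕ :=
  sSup {n | ∃ I : Finset V, IsIndepFinset G I ∧ I.card = n}

def IsLeaf (G : SimpleGraph V) [DecidableRel G.Adj] (v : V) : Prop :=
  G.degree v = 1

def IsSupport (G : SimpleGraph V) [DecidableRel G.Adj] (v : V) : Prop :=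
  ∃ u, G.Adj v u ∧ IsLeaf G u

def IsWeakSupport (G : SimpleGraph V) [DecidableRel G.Adj] (v : V) : Prop :=
  ((G.neighborFinset v).filter fun l => G.degree l = 1).card = 1

def IsBipartition (G : SimpleGraph V) (A B : Finset V) : Prop :=
  A ∪ B = Finset.univ ∧ Disjoint A B ∧
    ∀ ⦃u v : V⦄, G.Adj u v → (u ∈ A ∧ v ∈ B) ∨ (u ∈ B ∧ v ∈ A)

theorem minDegree_le_two_of_domNum_eq_coverNum (G : SimpleGraph V) [DecidableRel G.Adj]
    [Nonempty V] (hconn : G.Connected) (h : domNum G = coverNum G) :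
    G.minDegree ≤ 2 := by
  by_contra hd
  push_neg at hd
  have hdeg : ∀ v, 3 ≤ G.degree v := fun v => le_trans hd (G.minDegree_le_degree v)
  -- a minimum vertex cover exists
  have hne : {n | ∃ C : Finset V, IsVertexCover G C ∧ C.card = n}.Nonempty :=
    ⟨(univ : Finset V).card, univ, fun u v _ => Or.inl (mem_univ u), rfl⟩
  obtain ⟨C, hC, hCcard⟩ := Nat.sInf_mem hne
  -- coverNum ≤ n - 1, so there is a vertex outside C
  obtain ⟨v0⟩ := ‹Nonempty V›
  have hcov' : IsVertexCover G (univ.erase v0) := by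
    intro u v huv
    by_cases hu : u = v0
    · exact Or.inr (Finset.mem_erase.mpr ⟨fun hv => huv.ne (hu.trans hv.symm), mem_univ v⟩)
    · exact Or.inl (Finset.mem_erase.mpr ⟨hu, mem_univ u⟩)
  have hlt : coverNum G < (univ : Finset V).card := by
    have h1 : coverNum G ≤ (univ.erase v0).card :=
      Nat.sInf_le ⟨univ.erase v0, hcov', rfl⟩
    have h2 : (univ.erase v0).card < (univ : Finset V).card :=
      Finset.card_erase_lt_of_mem (mem_univ v0)
    exact lt_of_le_of_lt h1 h2
  have hClt : C.card < (univ : Finset V).card := hCcard ▸ hlt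
  have hiex : ∃ i : V, i ∉ C := by
    by_contra hno
    push_neg at hno
    have : C = univ := Finset.eq_univ_iff_forall.mpr hno
    simp [this] at hClt
  obtain ⟨i, hi⟩ := hiex
  -- all neighbors of i are in C
  have hNC : G.neighborFinset i ⊆ C := by
    intro u hu
    rw [SimpleGraph.mem_neighborFinset] at hu
    exact (hC hu).resolve_left hi
  -- pick two distinct neighbors of i
  have hcard : 1 < (G.neighborFinset i).card := by
    have := hdeg i
    rw [G.card_neighborFinset_eq_degree]
    omega
  obtain ⟨c2, hc2, c3, hc3, hcc⟩ := Finset.one_lt_card.mp hcard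
  have hc2C : c2 ∈ C := hNC hc2
  have hc3C : c3 ∈ C := hNC hc3
  have hic2 : G.Adj i c2 := (SimpleGraph.mem_neighborFinset _ _ _).mp hc2
  have hic3 : G.Adj i c3 := (SimpleGraph.mem_neighborFinset _ _ _).mp hc3
  -- the swapped set
  set D : Finset V := insert i (C \ {c2, c3}) with hD
  have hiD : i ∈ D := Finset.mem_insert_self _ _
  have hdom : IsDomSet G D := by
    intro v hv
    by_cases hvc : v = c2 ∨ v = c3
    · refine ⟨i, hiD, ?_⟩
      rcases hvc with rfl | rfl
      · exact hic2
      · exact hic3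
    · push_neg at hvc
      have hvi : v ≠ i := fun hvi => hv (hvi ▸ hiD)
      have hvC : v ∉ C := by
        intro hvC
        exact hv (Finset.mem_insert_of_mem (Finset.mem_sdiff.mpr ⟨hvC, by
          simp [hvc.1, hvc.2]⟩))
      -- neighbors of v are all in C; v has ≥ 3 neighbors, so one avoids {c2, c3}
      have hNvC : G.neighborFinset v ⊆ C := by
        intro u hu
        rw [SimpleGraph.mem_neighborFinset] at hu
        exact (hC hu.symm).resolve_right hvC
      have hcard2 : ({c2, c3} : Finset V).card < (G.neighborFinset v).card := by
        have h3 := hdeg v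
        rw [G.card_neighborFinset_eq_degree]
        have : ({c2, c3} : Finset V).card ≤ 2 := Finset.card_insert_le _ _ |>.trans (by simp)
        omega
      have : ¬ G.neighborFinset v ⊆ ({c2, c3} : Finset V) := by
        intro hsub
        exact absurd (Finset.card_le_card hsub) (not_le.mpr hcard2)
      obtain ⟨u, hu, hu2⟩ := Finset.not_subset.mp this
      refine ⟨u, Finset.mem_insert_of_mem (Finset.mem_sdiff.mpr ⟨hNvC hu, hu2⟩), ?_⟩
      exact ((SimpleGraph.mem_neighborFinset _ _ _).mp hu).symm
  -- D has size C.card - 1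
  have hsub : ({c2, c3} : Finset V) ⊆ C := by
    intro x hx
    rcases Finset.mem_insert.mp hx with rfl | hx
    · exact hc2C
    · exact (Finset.mem_singleton.mp hx) ▸ hc3C
  have hpair : ({c2, c3} : Finset V).card = 2 := Finset.card_pair hcc
  have hiD' : i ∉ C \ ({c2, c3} : Finset V) := fun hmem => hi (Finset.mem_sdiff.mp hmem).1
  have hDcard : D.card = C.card - 1 := by
    rw [hD, Finset.card_insert_of_notMem hiD', Finset.card_sdiff_of_subset hsub, hpair]
    have : 2 ≤ C.card := hpair ▸ Finset.card_le_card hsub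
    omega
  have hC2 : 2 ≤ C.card := hpair ▸ Finset.card_le_card hsub
  have hdomle : domNum G ≤ C.card - 1 := Nat.sInf_le ⟨D, hdom, hDcard⟩
  have hfin : C.card = coverNum G := hCcard
  omega
end

section
/- If G is a connected graph with γ(G) = β(G) and δ(G) = 2, then G is bipartite. -/
open Finset

variable {V : Type} [Fintype V] [DecidableEq V]

theorem bipartite_of_domNum_eq_coverNum_minDegree_two (G : SimpleGraph V) [DecidableRel G.Adj]
    [Nonempty V] (hconn : G.Connected) (h : domNum G = coverNum G)
    (hdelta : G.minDegree = 2) :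
    G.Colorable 2 := by
  classical
  -- the set of cover cardinalities is nonempty
  have hne : {n | ∃ C : Finset V, IsVertexCover G C ∧ C.card = n}.Nonempty :=
    ⟨(Finset.univ : Finset V).card, Finset.univ, fun u v _ => Or.inl (Finset.mem_univ u), rfl⟩
  obtain ⟨C, hC, hCcard⟩ : coverNum G ∈ {n | ∃ C : Finset V, IsVertexCover G C ∧ C.card = n} :=
    Nat.sInf_mem hne
  -- C is independent
  have hCindep : ∀ u ∈ C, ∀ v ∈ C, ¬ G.Adj u v := by
    intro u hu v hv hadj
    -- C.erase u is dominating
    have hdom : IsDomSet G (C.erase u) := by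
      intro w hw
      by_cases hwu : w = u
      · subst hwu
        refine ⟨v, Finset.mem_erase.2 ⟨fun hvu => G.ne_of_adj hadj hvu.symm, hv⟩, hadj.symm⟩
      · have hwC : w ∉ C := fun hwC => hw (Finset.mem_erase.2 ⟨hwu, hwC⟩)
        have hdeg : 1 < (G.neighborFinset w).card := by
          have h2 := G.minDegree_le_degree w
          rw [hdelta] at h2
          exact h2
        obtain ⟨x, hx, hxu⟩ := Finset.exists_mem_ne hdeg u
        have hadjwx : G.Adj w x := (SimpleGraph.mem_neighborFinset _ _ _).1 hx
        have hxC : x ∈ C := by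
          rcases hC hadjwx with h1 | h2
          · exact absurd h1 hwC
          · exact h2
        exact ⟨x, Finset.mem_erase.2 ⟨hxu, hxC⟩, hadjwx.symm⟩
    have hle : domNum G ≤ (C.erase u).card :=
      Nat.sInf_le ⟨C.erase u, hdom, rfl⟩
    have hlt : (C.erase u).card < C.card := Finset.card_erase_lt_of_mem hu
    rw [h] at hle
    rw [hCcard] at hlt
    omega
  -- the 2-coloring
  refine ⟨SimpleGraph.Coloring.mk (fun v => if v ∈ C then 0 else 1) ?_⟩
  intro u v hadj
  by_cases hu : u ∈ C
  · have hv : v ∉ C := fun hv => hCindep u hu v hv hadj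
    simp [hu, hv]
  · have hv : v ∈ C := by
      rcases hC hadj with h1 | h2
      · exact absurd h1 hu
      · exact h2
    simp [hu, hv]
end

section
/- Let G be a connected bipartite graph with bipartition (A,B), 1 ≤ |A| ≤ |B|. If γ(G) = |A|, then α(G) = |B| and β(G) = |A|. -/
open Finset

variable {V : Type} [Fintype V] [DecidableEq V]

theorem indepNum_and_coverNum_of_domNum_eq_smaller_side (G : SimpleGraph V)
    (A B : Finset V) (hconn : G.Connected) (hbip : IsBipartition G A B)
    (hA : 1 ≤ A.card) (hAB : A.card ≤ B.card) (hdom : domNum G = A.card) :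
    indepNum G = B.card ∧ coverNum G = A.card := by
  obtain ⟨hUnion, hDisj, hEdge⟩ := hbip
  -- every vertex has a neighbor
  have hcardV : A.card + B.card = Fintype.card V := by
    rw [← Finset.card_union_of_disjoint hDisj, hUnion, Finset.card_univ]
  have hdeg : ∀ v : V, ∃ u, G.Adj u v := by
    intro v
    have h2 : 2 ≤ Fintype.card V := by omega
    obtain ⟨w, hw⟩ := Fintype.exists_ne_of_one_lt_card (by omega) v
    obtain ⟨p⟩ := hconn v w
    have hnn : ¬ p.Nil := SimpleGraph.Walk.not_nil_of_ne (Ne.symm hw)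
    exact ⟨p.getVert 1, (p.adj_snd hnn).symm⟩
  have hAcover : IsVertexCover G A := by
    intro u v h
    rcases hEdge h with ⟨hu, _⟩ | ⟨_, hv⟩
    · exact Or.inl hu
    · exact Or.inr hv
  have hCoverDom : ∀ C : Finset V, IsVertexCover G C → IsDomSet G C := by
    intro C hC v hv
    obtain ⟨u, hu⟩ := hdeg v
    rcases hC hu with h | h
    · exact ⟨u, h, hu⟩
    · exact absurd h hv
  have hmemA : A.card ∈ {n | ∃ C : Finset V, IsVertexCover G C ∧ C.card = n} :=
    ⟨A, hAcover, rfl⟩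
  have hcover_le : coverNum G ≤ A.card := Nat.sInf_le hmemA
  have hle_cover : A.card ≤ coverNum G := by
    apply le_csInf ⟨A.card, hmemA⟩
    rintro n ⟨C, hC, rfl⟩
    rw [← hdom]
    have : C.card ∈ {n | ∃ D : Finset V, IsDomSet G D ∧ D.card = n} :=
      ⟨C, hCoverDom C hC, rfl⟩
    exact Nat.sInf_le this
  have hcov : coverNum G = A.card := le_antisymm hcover_le hle_cover
  have hBindep : IsIndepFinset G B := by
    intro u hu v hv hadj
    rcases hEdge hadj with ⟨huA, _⟩ | ⟨_, hvA⟩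
    · exact (Finset.disjoint_left.mp hDisj) huA hu
    · exact (Finset.disjoint_left.mp hDisj) hvA hv
  have hle_indep : B.card ≤ indepNum G := by
    have hbdd : BddAbove {n | ∃ I : Finset V, IsIndepFinset G I ∧ I.card = n} := by
      refine ⟨Fintype.card V, ?_⟩
      rintro n ⟨I, _, rfl⟩
      exact Finset.card_le_univ I
    exact le_csSup hbdd ⟨B, hBindep, rfl⟩
  have hindep_le : indepNum G ≤ B.card := by
    have hne : ({n | ∃ I : Finset V, IsIndepFinset G I ∧ I.card = n} : Set ℕ).Nonempty :=
      ⟨0, ∅, fun u hu => by simp at hu, rfl⟩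
    apply csSup_le hne
    rintro n ⟨I, hI, rfl⟩
    have hcompl : IsVertexCover G Iᶜ := by
      intro u v h
      by_contra hcon
      push_neg at hcon
      simp only [Finset.mem_compl, not_not] at hcon
      exact hI u hcon.1 v hcon.2 h
    have hm : Iᶜ.card ∈ {n | ∃ C : Finset V, IsVertexCover G C ∧ C.card = n} :=
      ⟨Iᶜ, hcompl, rfl⟩
    have h1 : coverNum G ≤ Iᶜ.card := Nat.sInf_le hm
    rw [hcov, Finset.card_compl] at h1
    have h2 : I.card ≤ Fintype.card V := Finset.card_le_univ I
    omega
  exact ⟨le_antisymm hindep_le hle_indep, hcov⟩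
end

section
/- Let G be a connected bipartite graph with bipartition (A,B) and 1 ≤ |A| ≤ |B|. Then γ(G) = |A| if and only if γ(G) = β(G) = |A|. -/
open Finset

variable {V : Type} [Fintype V] [DecidableEq V]

theorem domNum_eq_smaller_side_iff_domNum_eq_coverNum (G : SimpleGraph V)
    (A B : Finset V) (hconn : G.Connected) (hbip : IsBipartition G A B)
    (hA : 1 ≤ A.card) (hAB : A.card ≤ B.card) :
    domNum G = A.card ↔ (domNum G = A.card ∧ coverNum G = A.card) := by
  constructor
  · intro h
    refine ⟨h, ?_⟩
    obtain ⟨hcov, hdisj, hadj⟩ := hbip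
    have hBne : B.Nonempty := Finset.card_pos.mp (lt_of_lt_of_le hA hAB)
    have hAne : A.Nonempty := Finset.card_pos.mp hA
    -- every vertex has a neighbor
    have hnbr : ∀ v : V, ∃ u, G.Adj u v := by
      intro v
      obtain ⟨a, ha⟩ := hAne
      obtain ⟨b, hb⟩ := hBne
      have hne : ∃ w : V, w ≠ v := by
        by_cases hva : v = a
        · refine ⟨b, fun hbv => ?_⟩
          exact Finset.disjoint_left.mp hdisj (hva ▸ ha) (hbv ▸ hb)
        · exact ⟨a, fun hh => hva hh.symm⟩
      obtain ⟨w, hw⟩ := hne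
      obtain ⟨p⟩ := hconn v w
      cases p with
      | nil => exact absurd rfl hw
      | cons hadj' _ => exact ⟨_, hadj'.symm⟩
    -- A is a vertex cover
    have hAcover : IsVertexCover G A := by
      intro u v huv
      rcases hadj huv with ⟨h1, _⟩ | ⟨_, h2⟩
      · exact Or.inl h1
      · exact Or.inr h2
    have hcovA : coverNum G ≤ A.card := Nat.sInf_le ⟨A, hAcover, rfl⟩
    -- minimum cover exists
    have hmem : coverNum G ∈ {n | ∃ C : Finset V, IsVertexCover G C ∧ C.card = n} :=
      Nat.sInf_mem ⟨A.card, A, hAcover, rfl⟩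
    obtain ⟨C, hC, hCcard⟩ := hmem
    -- C is a dominating set
    have hCdom : IsDomSet G C := by
      intro v hv
      obtain ⟨u, hu⟩ := hnbr v
      rcases hC hu with h1 | h2
      · exact ⟨u, h1, hu⟩
      · exact absurd h2 hv
    have hdom : domNum G ≤ coverNum G := hCcard ▸ Nat.sInf_le ⟨C, hCdom, rfl⟩
    omega
  · exact fun h => h.1
end

section
/- Let G be a connected bipartite graph with bipartition (A,B), 1 ≤ |A| ≤ |B|. Then γ(G) = |A| if and only if both: (a) every support vertex of G in B is adjacent to exactly one leaf, and every non-leaf neighbor of such a support vertex is itself a support vertex; and (b) for any two vertices x, y in A that are neither leaves nor support vertices with d(x,y) = 2, there exist at least two distinct vertices x̄, ȳ in B with N(x̄) = N(ȳ) = {x, y}. -/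
open Finset

variable {V : Type} [Fintype V] [DecidableEq V]

-- auxiliary defs
open Classical in
noncomputable def pickLeaf (G : SimpleGraph V) [DecidableRel G.Adj] (x : V) : V :=
  if h : IsSupport G x then h.choose else x

lemma pickLeaf_spec {G : SimpleGraph V} [DecidableRel G.Adj] {x : V} (h : IsSupport G x) :
    G.Adj x (pickLeaf G x) ∧ IsLeaf G (pickLeaf G x) := by
  rw [pickLeaf, dif_pos h]; exact h.choose_spec

open Classical in
noncomputable def pickDom (G : SimpleGraph V) (D : Finset V) (x : V) : V :=
  if h : ∃ u, u ∈ D ∧ G.Adj u x then h.choose else x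

lemma pickDom_spec {G : SimpleGraph V} {D : Finset V} {x : V} (h : ∃ u, u ∈ D ∧ G.Adj u x) :
    pickDom G D x ∈ D ∧ G.Adj (pickDom G D x) x := by
  rw [pickDom, dif_pos h]; exact h.choose_spec

open Classical in
noncomputable def pickWit (G : SimpleGraph V) [DecidableRel G.Adj] (B : Finset V) (x y : V) (i : Bool) : V :=
  if h : ∃ p : V × V, p.1 ≠ p.2 ∧ G.neighborFinset p.1 = {x, y} ∧ G.neighborFinset p.2 = {x, y}
  then (if i then h.choose.1 else h.choose.2) else x

lemma pickWit_spec {G : SimpleGraph V} [DecidableRel G.Adj] {B : Finset V} {x y : V}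
    (h : ∃ p : V × V, p.1 ≠ p.2 ∧ G.neighborFinset p.1 = {x, y} ∧ G.neighborFinset p.2 = {x, y}) :
    pickWit G B x y true ≠ pickWit G B x y false ∧
    G.neighborFinset (pickWit G B x y true) = {x, y} ∧
    G.neighborFinset (pickWit G B x y false) = {x, y} := by
  unfold pickWit
  rw [dif_pos h, dif_pos h]
  simpa using h.choose_spec

open Classical in
noncomputable def fiber (G : SimpleGraph V) [DecidableRel G.Adj] (A D : Finset V) (x : V) : Finset V :=
  A.filter fun y => y ∉ D ∧ ¬ IsLeaf G y ∧ ¬ IsSupport G y ∧ pickDom G D y = pickDom G D x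

lemma mem_fiber {G : SimpleGraph V} [DecidableRel G.Adj] {A D : Finset V} {x y : V} :
    y ∈ fiber G A D x ↔ y ∈ A ∧ y ∉ D ∧ ¬ IsLeaf G y ∧ ¬ IsSupport G y ∧
      pickDom G D y = pickDom G D x := by
  simp [fiber]

lemma fiber_congr {G : SimpleGraph V} [DecidableRel G.Adj] {A D : Finset V} {x y : V}
    (h : pickDom G D x = pickDom G D y) : fiber G A D x = fiber G A D y := by
  unfold fiber; rw [h]

open Classical in
noncomputable def phi (G : SimpleGraph V) [DecidableRel G.Adj] [LinearOrder V]
    (A B D : Finset V) (x : V) : V :=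
  if x ∈ D then x
  else if IsSupport G x then pickLeaf G x
  else if hx : x ∈ fiber G A D x ∧ 1 < (fiber G A D x).card then
    have h0 : (fiber G A D x).Nonempty := ⟨x, hx.1⟩
    have h1 : ((fiber G A D x).erase ((fiber G A D x).min' h0)).Nonempty := by
      rw [← Finset.card_pos, Finset.card_erase_of_mem (Finset.min'_mem _ _)]; omega
    if x = (fiber G A D x).min' h0 then
      pickWit G B ((fiber G A D x).min' h0)
        (((fiber G A D x).erase ((fiber G A D x).min' h0)).min' h1) true
    else if x = ((fiber G A D x).erase ((fiber G A D x).min' h0)).min' h1 then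
      pickWit G B ((fiber G A D x).min' h0)
        (((fiber G A D x).erase ((fiber G A D x).min' h0)).min' h1) false
    else pickWit G B ((fiber G A D x).min' h0) x true
  else pickDom G D x

lemma leaf_adj_unique {G : SimpleGraph V} [DecidableRel G.Adj] {l a b : V}
    (hl : IsLeaf G l) (ha : G.Adj l a) (hb : G.Adj l b) : a = b := by
  have h1 : (G.neighborFinset l).card = 1 := by
    rw [G.card_neighborFinset_eq_degree]; exact hl
  obtain ⟨c, hc⟩ := Finset.card_eq_one.mp h1
  have ha' : a ∈ G.neighborFinset l := (G.mem_neighborFinset l a).mpr ha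
  have hb' : b ∈ G.neighborFinset l := (G.mem_neighborFinset l b).mpr hb
  rw [hc, Finset.mem_singleton] at ha' hb'; rw [ha', hb']

lemma leaf_nbhd {G : SimpleGraph V} [DecidableRel G.Adj] {l a : V}
    (hl : IsLeaf G l) (ha : G.Adj l a) : G.neighborFinset l = {a} := by
  ext z
  simp only [SimpleGraph.mem_neighborFinset, Finset.mem_singleton]
  exact ⟨fun h => leaf_adj_unique hl h ha, fun h => h ▸ ha⟩

lemma aux_card_le (G : SimpleGraph V) [DecidableRel G.Adj] (A B D : Finset V)
    (hbip : IsBipartition G A B)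
    (hwa : ∀ v ∈ B, IsSupport G v → IsWeakSupport G v ∧
        ∀ u, G.Adj v u → ¬ IsLeaf G u → IsSupport G u)
    (hwb : ∀ x ∈ A, ∀ y ∈ A, ¬ IsLeaf G x → ¬ IsSupport G x → ¬ IsLeaf G y → ¬ IsSupport G y →
          G.dist x y = 2 →
          ∃ xb ∈ B, ∃ yb ∈ B, xb ≠ yb ∧
            G.neighborFinset xb = {x, y} ∧ G.neighborFinset yb = {x, y})
    (hD : IsDomSet G D) : A.card ≤ D.card := by
  classical
  letI : LinearOrder V := LinearOrder.lift' (Fintype.equivFin V) (Fintype.equivFin V).injective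
  obtain ⟨hU, hdisj, hadj⟩ := hbip
  have adjB : ∀ {u w : V}, G.Adj u w → w ∈ A → u ∈ B := by
    intro u w h hw
    rcases hadj h with ⟨hu, hw'⟩ | ⟨hu, hw'⟩
    · exact absurd hw' (Finset.disjoint_left.mp hdisj hw)
    · exact hu
  have notAA : ∀ {u w : V}, u ∈ A → w ∈ A → ¬ G.Adj u w := by
    intro u w hu hw h
    rcases hadj h with ⟨_, h2⟩ | ⟨h2, _⟩
    · exact Finset.disjoint_left.mp hdisj hw h2
    · exact Finset.disjoint_left.mp hdisj hu h2
  have hdomex : ∀ x, x ∉ D → ∃ u, u ∈ D ∧ G.Adj u x := by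
    intro x hx
    obtain ⟨u, hu, ha⟩ := hD x hx
    exact ⟨u, hu, ha⟩
  -- Support-class profile
  have hSprof : ∀ x, x ∈ A → x ∉ D → IsSupport G x →
      phi G A B D x = pickLeaf G x ∧ IsLeaf G (pickLeaf G x) ∧
      G.neighborFinset (pickLeaf G x) = {x} ∧ pickLeaf G x ∈ D ∧ pickLeaf G x ∈ B := by
    intro x hxA hxD hxS
    obtain ⟨hadj1, hleaf1⟩ := pickLeaf_spec hxS
    have hnb : G.neighborFinset (pickLeaf G x) = {x} := leaf_nbhd hleaf1 hadj1.symm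
    have hB1 : pickLeaf G x ∈ B := adjB hadj1.symm hxA
    have hD1 : pickLeaf G x ∈ D := by
      by_contra hnd
      obtain ⟨u, huD, hu⟩ := hdomex _ hnd
      have hux : u = x := leaf_adj_unique hleaf1 hu.symm hadj1.symm
      exact hxD (hux ▸ huD)
    refine ⟨?_, hleaf1, hnb, hD1, hB1⟩
    unfold phi; rw [if_neg hxD, if_pos hxS]
  -- Leaf-class profile
  have hLprof : ∀ x, x ∈ A → x ∉ D → ¬ IsSupport G x → IsLeaf G x →
      phi G A B D x = pickDom G D x ∧ pickDom G D x ∈ D ∧ pickDom G D x ∈ B ∧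
      G.Adj (pickDom G D x) x ∧ IsSupport G (pickDom G D x) ∧ ¬ IsLeaf G (pickDom G D x) := by
    intro x hxA hxD hxS hxL
    obtain ⟨h1, h2⟩ := pickDom_spec (hdomex x hxD)
    have hB1 : pickDom G D x ∈ B := adjB h2 hxA
    refine ⟨?_, h1, hB1, h2, ⟨x, h2, hxL⟩, fun hl => hxS ⟨_, h2.symm, hl⟩⟩
    unfold phi
    rw [if_neg hxD, if_neg hxS, dif_neg (fun hmem => (mem_fiber.mp hmem.1).2.2.1 hxL)]
  -- Free-class machinery
  have hwitex : ∀ u v : V,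
      (u ∈ A ∧ u ∉ D ∧ ¬ IsLeaf G u ∧ ¬ IsSupport G u) →
      (v ∈ A ∧ v ∉ D ∧ ¬ IsLeaf G v ∧ ¬ IsSupport G v) → u ≠ v →
      pickDom G D u = pickDom G D v →
      ∃ p : V × V, p.1 ≠ p.2 ∧ G.neighborFinset p.1 = {u, v} ∧
        G.neighborFinset p.2 = {u, v} := by
    intro u v hu hv hne' hpd
    obtain ⟨hbD, hbu⟩ := pickDom_spec (hdomex u hu.2.1)
    have hbv : G.Adj (pickDom G D u) v := by
      rw [hpd]; exact (pickDom_spec (hdomex v hv.2.1)).2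
    have hle : G.dist u v ≤ 2 := by
      simpa using SimpleGraph.dist_le
        (SimpleGraph.Walk.cons hbu.symm (SimpleGraph.Walk.cons hbv SimpleGraph.Walk.nil))
    have hw : G.Walk u v :=
      SimpleGraph.Walk.cons hbu.symm (SimpleGraph.Walk.cons hbv SimpleGraph.Walk.nil)
    have h0 : G.dist u v ≠ 0 := by
      intro h
      rcases SimpleGraph.dist_eq_zero_iff_eq_or_not_reachable.mp h with h | h
      · exact hne' h
      · exact h ⟨hw⟩
    have h1 : G.dist u v ≠ 1 := fun h => notAA hu.1 hv.1 (SimpleGraph.dist_eq_one_iff_adj.mp h)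
    have hd2 : G.dist u v = 2 := by omega
    obtain ⟨xb, hxbB, yb, hybB, hnexy, hx1, hy1⟩ :=
      hwb u hu.1 v hv.1 hu.2.2.1 hu.2.2.2 hv.2.2.1 hv.2.2.2 hd2
    exact ⟨(xb, yb), hnexy, hx1, hy1⟩
  have hwitprop : ∀ (u v w : V),
      (u ∈ A ∧ u ∉ D ∧ ¬ IsLeaf G u ∧ ¬ IsSupport G u) →
      (v ∈ A ∧ v ∉ D ∧ ¬ IsLeaf G v ∧ ¬ IsSupport G v) → u ≠ v →
      G.neighborFinset w = {u, v} →
      w ∈ D ∧ w ∈ B ∧ ¬ IsLeaf G w ∧ ¬ IsSupport G w := by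
    intro u v w hu hv huv hnw
    have hadjwu : G.Adj w u := by
      rw [← SimpleGraph.mem_neighborFinset, hnw]; simp
    have hB1 : w ∈ B := adjB hadjwu hu.1
    have hwD : w ∈ D := by
      by_contra hnd
      obtain ⟨z, hzD, hz⟩ := hdomex w hnd
      have hzmem : z ∈ G.neighborFinset w := by
        rw [SimpleGraph.mem_neighborFinset]; exact hz.symm
      rw [hnw] at hzmem
      simp only [Finset.mem_insert, Finset.mem_singleton] at hzmem
      rcases hzmem with rfl | rfl
      · exact hu.2.1 hzD
      · exact hv.2.1 hzD
    have hnl : ¬ IsLeaf G w := by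
      intro hl
      have hc : (G.neighborFinset w).card = 1 := by
        rw [G.card_neighborFinset_eq_degree]; exact hl
      rw [hnw, Finset.card_insert_of_notMem (by simpa using huv), Finset.card_singleton] at hc
      omega
    have hns : ¬ IsSupport G w := by
      rintro ⟨z, hz, hzl⟩
      have hzmem : z ∈ G.neighborFinset w := by
        rw [SimpleGraph.mem_neighborFinset]; exact hz
      rw [hnw] at hzmem
      simp only [Finset.mem_insert, Finset.mem_singleton] at hzmem
      rcases hzmem with rfl | rfl
      · exact hu.2.2.1 hzl
      · exact hv.2.2.1 hzl
    exact ⟨hwD, hB1, hnl, hns⟩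
  have hpdprop : ∀ x, (x ∈ A ∧ x ∉ D ∧ ¬ IsLeaf G x ∧ ¬ IsSupport G x) →
      pickDom G D x ∈ D ∧ pickDom G D x ∈ B ∧ ¬ IsLeaf G (pickDom G D x) ∧
      ¬ IsSupport G (pickDom G D x) := by
    intro x hx
    obtain ⟨h1, h2⟩ := pickDom_spec (hdomex x hx.2.1)
    have hB1 : pickDom G D x ∈ B := adjB h2 hx.1
    refine ⟨h1, hB1, fun hl => hx.2.2.2 ⟨_, h2.symm, hl⟩, fun hs => ?_⟩
    exact hx.2.2.2 ((hwa _ hB1 hs).2 x h2 hx.2.2.1)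
  -- evaluation of phi on free vertices
  have evalF : ∀ x, (x ∈ A ∧ x ∉ D ∧ ¬ IsLeaf G x ∧ ¬ IsSupport G x) →
      (¬ 1 < (fiber G A D x).card ∧ phi G A B D x = pickDom G D x) ∨
      (1 < (fiber G A D x).card ∧ ∃ m m2, m ∈ fiber G A D x ∧ m2 ∈ fiber G A D x ∧ m ≠ m2 ∧
        (∀ z ∈ fiber G A D x, m ≤ z) ∧ (∀ z ∈ fiber G A D x, z ≠ m → m2 ≤ z) ∧
        ((x = m ∧ phi G A B D x = pickWit G B m m2 true) ∨
         (x = m2 ∧ phi G A B D x = pickWit G B m m2 false) ∨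
         (x ≠ m ∧ x ≠ m2 ∧ phi G A B D x = pickWit G B m x true))) := by
    intro x hx
    have hxf : x ∈ fiber G A D x :=
      mem_fiber.mpr ⟨hx.1, hx.2.1, hx.2.2.1, hx.2.2.2, rfl⟩
    by_cases hc : 1 < (fiber G A D x).card
    · right
      refine ⟨hc, ?_⟩
      have h0 : (fiber G A D x).Nonempty := ⟨x, hxf⟩
      have h1' : ((fiber G A D x).erase ((fiber G A D x).min' h0)).Nonempty := by
        rw [← Finset.card_pos, Finset.card_erase_of_mem (Finset.min'_mem _ _)]; omega
      refine ⟨(fiber G A D x).min' h0,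
        ((fiber G A D x).erase ((fiber G A D x).min' h0)).min' h1',
        Finset.min'_mem _ _, Finset.mem_of_mem_erase (Finset.min'_mem _ _),
        (Finset.ne_of_mem_erase (Finset.min'_mem _ _)).symm,
        fun z hz => Finset.min'_le _ _ hz,
        fun z hz hzm => Finset.min'_le _ _ (Finset.mem_erase.mpr ⟨hzm, hz⟩), ?_⟩
      unfold phi
      rw [if_neg hx.2.1, if_neg hx.2.2.2, dif_pos ⟨hxf, hc⟩]
      simp only [letFun]
      split_ifs with he1 he2
      · exact Or.inl ⟨he1, rfl⟩
      · exact Or.inr (Or.inl ⟨he2, rfl⟩)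
      · exact Or.inr (Or.inr ⟨he1, he2, rfl⟩)
    · left
      refine ⟨hc, ?_⟩
      unfold phi
      rw [if_neg hx.2.1, if_neg hx.2.2.2, dif_neg (fun h => hc h.2)]
  have hfibF : ∀ {x z : V}, z ∈ fiber G A D x →
      (z ∈ A ∧ z ∉ D ∧ ¬ IsLeaf G z ∧ ¬ IsSupport G z) := by
    intro x z hz
    obtain ⟨h1, h2, h3, h4, _⟩ := mem_fiber.mp hz
    exact ⟨h1, h2, h3, h4⟩
  have hNpair : ∀ x, (x ∈ A ∧ x ∉ D ∧ ¬ IsLeaf G x ∧ ¬ IsSupport G x) →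
      1 < (fiber G A D x).card →
      ∃ a b, a ∈ fiber G A D x ∧ b ∈ fiber G A D x ∧ a ≠ b ∧
        G.neighborFinset (phi G A B D x) = {a, b} := by
    intro x hx hc
    have hxf : x ∈ fiber G A D x :=
      mem_fiber.mpr ⟨hx.1, hx.2.1, hx.2.2.1, hx.2.2.2, rfl⟩
    rcases evalF x hx with ⟨hc', _⟩ | ⟨_, m, m2, hmf, hm2f, hmm2, _, _, hcase⟩
    · exact absurd hc hc'
    · have hpdm : pickDom G D m = pickDom G D x := (mem_fiber.mp hmf).2.2.2.2
      have hpdm2 : pickDom G D m2 = pickDom G D x := (mem_fiber.mp hm2f).2.2.2.2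
      rcases hcase with ⟨_, hp⟩ | ⟨_, hp⟩ | ⟨hxm, _, hp⟩
      · obtain ⟨_, hN, _⟩ := pickWit_spec (B := B)
          (hwitex m m2 (hfibF hmf) (hfibF hm2f) hmm2 (hpdm.trans hpdm2.symm))
        exact ⟨m, m2, hmf, hm2f, hmm2, by rw [hp]; exact hN⟩
      · obtain ⟨_, _, hN⟩ := pickWit_spec (B := B)
          (hwitex m m2 (hfibF hmf) (hfibF hm2f) hmm2 (hpdm.trans hpdm2.symm))
        exact ⟨m, m2, hmf, hm2f, hmm2, by rw [hp]; exact hN⟩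
      · obtain ⟨_, hN, _⟩ := pickWit_spec (B := B)
          (hwitex m x (hfibF hmf) hx (Ne.symm hxm) hpdm)
        exact ⟨m, x, hmf, hxf, Ne.symm hxm, by rw [hp]; exact hN⟩
  have hFimg : ∀ x, (x ∈ A ∧ x ∉ D ∧ ¬ IsLeaf G x ∧ ¬ IsSupport G x) →
      phi G A B D x ∈ D ∧ phi G A B D x ∈ B ∧ ¬ IsLeaf G (phi G A B D x) ∧
      ¬ IsSupport G (phi G A B D x) := by
    intro x hx
    by_cases hc : 1 < (fiber G A D x).card
    · obtain ⟨a, b, haf, hbf, hab, hN⟩ := hNpair x hx hc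
      exact hwitprop a b _ (hfibF haf) (hfibF hbf) hab hN
    · rcases evalF x hx with ⟨_, hp⟩ | ⟨hc', _⟩
      · rw [hp]; exact hpdprop x hx
      · exact absurd hc' hc
  have hmix : ∀ x y, (x ∈ A ∧ x ∉ D ∧ ¬ IsLeaf G x ∧ ¬ IsSupport G x) →
      (y ∈ A ∧ y ∉ D ∧ ¬ IsLeaf G y ∧ ¬ IsSupport G y) →
      ¬ 1 < (fiber G A D x).card → 1 < (fiber G A D y).card →
      phi G A B D x ≠ phi G A B D y := by
    intro x y hx hy hcx hcy he
    rcases evalF x hx with ⟨_, hp1⟩ | ⟨hc', _⟩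
    · obtain ⟨a, b, haf, hbf, hab, hN⟩ := hNpair y hy hcy
      have hxmem : x ∈ G.neighborFinset (phi G A B D y) := by
        rw [← he, hp1, SimpleGraph.mem_neighborFinset]
        exact (pickDom_spec (hdomex x hx.2.1)).2
      rw [hN] at hxmem
      simp only [Finset.mem_insert, Finset.mem_singleton] at hxmem
      have hxfy : x ∈ fiber G A D y := by rcases hxmem with rfl | rfl <;> assumption
      have : fiber G A D x = fiber G A D y := fiber_congr (mem_fiber.mp hxfy).2.2.2.2
      rw [this] at hcx
      exact hcx hcy
    · exact hcx hc'
  have hFinj : ∀ x y, (x ∈ A ∧ x ∉ D ∧ ¬ IsLeaf G x ∧ ¬ IsSupport G x) →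
      (y ∈ A ∧ y ∉ D ∧ ¬ IsLeaf G y ∧ ¬ IsSupport G y) →
      phi G A B D x = phi G A B D y → x = y := by
    intro x y hx hy he
    have hxf : x ∈ fiber G A D x := mem_fiber.mpr ⟨hx.1, hx.2.1, hx.2.2.1, hx.2.2.2, rfl⟩
    have hyf : y ∈ fiber G A D y := mem_fiber.mpr ⟨hy.1, hy.2.1, hy.2.2.1, hy.2.2.2, rfl⟩
    by_cases hcx : 1 < (fiber G A D x).card
    · by_cases hcy : 1 < (fiber G A D y).card
      · -- both big fibers
        obtain ⟨a, b, haf, hbf, hab, hNx⟩ := hNpair x hx hcx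
        obtain ⟨c, d, hcf, hdf, hcd, hNy⟩ := hNpair y hy hcy
        have hNN : ({a, b} : Finset V) = {c, d} := by rw [← hNx, ← hNy, he]
        have hac : a ∈ ({c, d} : Finset V) := by rw [← hNN]; simp
        simp only [Finset.mem_insert, Finset.mem_singleton] at hac
        have hafy : a ∈ fiber G A D y := by rcases hac with rfl | rfl <;> assumption
        have hfeq : fiber G A D x = fiber G A D y :=
          fiber_congr (((mem_fiber.mp haf).2.2.2.2).symm.trans (mem_fiber.mp hafy).2.2.2.2)
        rcases evalF x hx with ⟨hc', _⟩ | ⟨_, m, m2, hmf, hm2f, hmm2, hmin, hmin2, hcase1⟩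
        · exact absurd hcx hc'
        rcases evalF y hy with ⟨hc', _⟩ | ⟨_, n, n2, hnf, hn2f, hnn2, hnmin, hnmin2, hcase2⟩
        · exact absurd hcy hc'
        have hmn : m = n :=
          le_antisymm (hmin n (by rw [hfeq]; exact hnf)) (hnmin m (by rw [← hfeq]; exact hmf))
        have hm2n2 : m2 = n2 := by
          apply le_antisymm
          · exact hmin2 n2 (by rw [hfeq]; exact hn2f) (by rw [hmn]; exact Ne.symm hnn2)
          · exact hnmin2 m2 (by rw [← hfeq]; exact hm2f) (by rw [← hmn]; exact Ne.symm hmm2)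
        rw [← hmn] at hcase2 hnf
        rw [← hm2n2] at hcase2
        have hpdm : pickDom G D m = pickDom G D x := (mem_fiber.mp hmf).2.2.2.2
        have hpdm2 : pickDom G D m2 = pickDom G D x := (mem_fiber.mp hm2f).2.2.2.2
        have hpdy : pickDom G D y = pickDom G D x := by
          have : y ∈ fiber G A D x := by rw [hfeq]; exact hyf
          exact (mem_fiber.mp this).2.2.2.2
        have hpdx : pickDom G D x = pickDom G D x := rfl
        have specmm2 := pickWit_spec (B := B)
          (hwitex m m2 (hfibF hmf) (hfibF hm2f) hmm2 (hpdm.trans hpdm2.symm))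
        rcases hcase1 with ⟨hx1, hp1⟩ | ⟨hx1, hp1⟩ | ⟨hx1a, hx1b, hp1⟩
        · rcases hcase2 with ⟨hy1, hp2⟩ | ⟨hy1, hp2⟩ | ⟨hy1a, hy1b, hp2⟩
          · exact hx1.trans hy1.symm
          · exact absurd (by rw [← hp1, ← hp2]; exact he) specmm2.1
          · exfalso
            have specmy := pickWit_spec (B := B)
              (hwitex m y (hfibF hmf) hy (Ne.symm hy1a) (hpdm.trans hpdy.symm))
            have hNeq : ({m, m2} : Finset V) = {m, y} := by
              rw [← specmm2.2.1, ← specmy.2.1, ← hp1, ← hp2, he]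
            have hm2mem : m2 ∈ ({m, y} : Finset V) := by rw [← hNeq]; simp
            simp only [Finset.mem_insert, Finset.mem_singleton] at hm2mem
            rcases hm2mem with h | h
            · exact hmm2 h.symm
            · exact hy1b h.symm
        · rcases hcase2 with ⟨hy1, hp2⟩ | ⟨hy1, hp2⟩ | ⟨hy1a, hy1b, hp2⟩
          · exact absurd (by rw [← hp1, ← hp2]; exact he) (Ne.symm specmm2.1)
          · exact hx1.trans hy1.symm
          · exfalso
            have specmy := pickWit_spec (B := B)
              (hwitex m y (hfibF hmf) hy (Ne.symm hy1a) (hpdm.trans hpdy.symm))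
            have hNeq : ({m, m2} : Finset V) = {m, y} := by
              rw [← specmm2.2.2, ← specmy.2.1, ← hp1, ← hp2, he]
            have hm2mem : m2 ∈ ({m, y} : Finset V) := by rw [← hNeq]; simp
            simp only [Finset.mem_insert, Finset.mem_singleton] at hm2mem
            rcases hm2mem with h | h
            · exact hmm2 h.symm
            · exact hy1b h.symm
        · have specmx := pickWit_spec (B := B)
            (hwitex m x (hfibF hmf) hx (Ne.symm hx1a) hpdm)
          rcases hcase2 with ⟨hy1, hp2⟩ | ⟨hy1, hp2⟩ | ⟨hy1a, hy1b, hp2⟩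
          · exfalso
            have hNeq : ({m, x} : Finset V) = {m, m2} := by
              rw [← specmx.2.1, ← specmm2.2.1, ← hp1, ← hp2, he]
            have hxmem : x ∈ ({m, m2} : Finset V) := by rw [← hNeq]; simp
            simp only [Finset.mem_insert, Finset.mem_singleton] at hxmem
            rcases hxmem with h | h
            · exact hx1a h
            · exact hx1b h
          · exfalso
            have hNeq : ({m, x} : Finset V) = {m, m2} := by
              rw [← specmx.2.1, ← specmm2.2.2, ← hp1, ← hp2, he]
            have hxmem : x ∈ ({m, m2} : Finset V) := by rw [← hNeq]; simp
            simp only [Finset.mem_insert, Finset.mem_singleton] at hxmem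
            rcases hxmem with h | h
            · exact absurd h hx1a
            · exact absurd h hx1b
          · have specmy := pickWit_spec (B := B)
              (hwitex m y (hfibF hmf) hy (Ne.symm hy1a) (hpdm.trans hpdy.symm))
            have hNeq : ({m, x} : Finset V) = {m, y} := by
              rw [← specmx.2.1, ← specmy.2.1, ← hp1, ← hp2, he]
            have hxmem : x ∈ ({m, y} : Finset V) := by rw [← hNeq]; simp
            simp only [Finset.mem_insert, Finset.mem_singleton] at hxmem
            rcases hxmem with h | h
            · exact absurd h hx1a
            · exact h
      · exact absurd he.symm (hmix y x hy hx hcy hcx)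
    · by_cases hcy : 1 < (fiber G A D y).card
      · exact absurd he (hmix x y hx hy hcx hcy)
      · rcases evalF x hx with ⟨_, hp1⟩ | ⟨hc', _⟩
        · rcases evalF y hy with ⟨_, hp2⟩ | ⟨hc', _⟩
          · have hpd : pickDom G D y = pickDom G D x := by rw [← hp1, ← hp2, he]
            have hyfx : y ∈ fiber G A D x :=
              mem_fiber.mpr ⟨hy.1, hy.2.1, hy.2.2.1, hy.2.2.2, hpd⟩
            exact (Finset.card_le_one.mp (not_lt.mp hcx) x hxf y hyfx)
          · exact absurd hc' hcy
        · exact absurd hc' hcx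
  -- assemble
  have himgB : ∀ z, z ∈ A → z ∉ D → phi G A B D z ∈ B ∧ phi G A B D z ∈ D := by
    intro z hzA hzD
    by_cases hzS : IsSupport G z
    · obtain ⟨hp, _, _, hD1, hB1⟩ := hSprof z hzA hzD hzS
      rw [hp]; exact ⟨hB1, hD1⟩
    · by_cases hzL : IsLeaf G z
      · obtain ⟨hp, hD1, hB1, _⟩ := hLprof z hzA hzD hzS hzL
        rw [hp]; exact ⟨hB1, hD1⟩
      · obtain ⟨hD1, hB1, _⟩ := hFimg z ⟨hzA, hzD, hzL, hzS⟩
        exact ⟨hB1, hD1⟩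
  have hid : ∀ z, z ∈ D → phi G A B D z = z := by
    intro z hz; unfold phi; rw [if_pos hz]
  apply Finset.card_le_card_of_injOn (phi G A B D)
  · intro x hx
    by_cases hxD : x ∈ D
    · rw [hid x hxD]; exact hxD
    · exact (himgB x hx hxD).2
  · intro x hx y hy he
    simp only [Finset.mem_coe] at hx hy
    by_cases hxD : x ∈ D <;> by_cases hyD : y ∈ D
    · rw [hid x hxD, hid y hyD] at he; exact he
    · exfalso
      have hB1 := (himgB y hy hyD).1
      rw [← he, hid x hxD] at hB1
      exact Finset.disjoint_left.mp hdisj hx hB1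
    · exfalso
      have hB1 := (himgB x hx hxD).1
      rw [he, hid y hyD] at hB1
      exact Finset.disjoint_left.mp hdisj hy hB1
    · by_cases hxS : IsSupport G x <;> by_cases hyS : IsSupport G y
      · obtain ⟨hp1, _, hn1, _⟩ := hSprof x hx hxD hxS
        obtain ⟨hp2, _, hn2, _⟩ := hSprof y hy hyD hyS
        have hsing : ({x} : Finset V) = {y} := by rw [← hn1, ← hn2, ← hp1, ← hp2, he]
        simpa using hsing
      · exfalso
        obtain ⟨hp1, hl1, _⟩ := hSprof x hx hxD hxS
        have hnl : ¬ IsLeaf G (phi G A B D y) := by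
          by_cases hyL : IsLeaf G y
          · rw [(hLprof y hy hyD hyS hyL).1]
            exact (hLprof y hy hyD hyS hyL).2.2.2.2.2
          · exact (hFimg y ⟨hy, hyD, hyL, hyS⟩).2.2.1
        rw [← he, hp1] at hnl
        exact hnl hl1
      · exfalso
        obtain ⟨hp2, hl2, _⟩ := hSprof y hy hyD hyS
        have hnl : ¬ IsLeaf G (phi G A B D x) := by
          by_cases hxL : IsLeaf G x
          · rw [(hLprof x hx hxD hxS hxL).1]
            exact (hLprof x hx hxD hxS hxL).2.2.2.2.2
          · exact (hFimg x ⟨hx, hxD, hxL, hxS⟩).2.2.1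
        rw [he, hp2] at hnl
        exact hnl hl2
      · by_cases hxL : IsLeaf G x <;> by_cases hyL : IsLeaf G y
        · obtain ⟨hp1, _, hB1, hadj1, hs1, _⟩ := hLprof x hx hxD hxS hxL
          obtain ⟨hp2, _, _, hadj2, _⟩ := hLprof y hy hyD hyS hyL
          have hweak : ((G.neighborFinset (pickDom G D x)).filter
              fun l => G.degree l = 1).card = 1 := (hwa _ hB1 hs1).1
          obtain ⟨c, hc⟩ := Finset.card_eq_one.mp hweak
          have hxmem : x ∈ (G.neighborFinset (pickDom G D x)).filter
              (fun l => G.degree l = 1) :=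
            Finset.mem_filter.mpr ⟨(G.mem_neighborFinset _ _).mpr hadj1, hxL⟩
          have hymem : y ∈ (G.neighborFinset (pickDom G D x)).filter
              (fun l => G.degree l = 1) := by
            have hpd : pickDom G D y = pickDom G D x := by rw [← hp1, ← hp2, he]
            refine Finset.mem_filter.mpr ⟨(G.mem_neighborFinset _ _).mpr ?_, hyL⟩
            rw [← hpd]; exact hadj2
          rw [hc, Finset.mem_singleton] at hxmem hymem
          rw [hxmem, hymem]
        · exfalso
          have hs1 : IsSupport G (phi G A B D x) := by
            have hl := hLprof x hx hxD hxS hxL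
            rw [hl.1]; exact hl.2.2.2.2.1
          rw [he] at hs1
          exact (hFimg y ⟨hy, hyD, hyL, hyS⟩).2.2.2 hs1
        · exfalso
          have hs2 : IsSupport G (phi G A B D y) := by
            have hl := hLprof y hy hyD hyS hyL
            rw [hl.1]; exact hl.2.2.2.2.1
          rw [← he] at hs2
          exact (hFimg x ⟨hx, hxD, hxL, hxS⟩).2.2.2 hs2
        · exact hFinj x y ⟨hx, hxD, hxL, hxS⟩ ⟨hy, hyD, hyL, hyS⟩ he


lemma exists_common_of_dist_two {G : SimpleGraph V} {x y : V} (hr : G.Reachable x y)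
    (h : G.dist x y = 2) : ∃ m, G.Adj x m ∧ G.Adj m y := by
  obtain ⟨p, hp⟩ := hr.exists_walk_length_eq_dist
  rw [h] at hp
  cases p with
  | nil => simp at hp
  | cons h1 q =>
    cases q with
    | nil => simp at hp
    | cons h2 r =>
      have hq : r.length = 0 := by
        simp only [SimpleGraph.Walk.length_cons] at hp; omega
      have hr0 := SimpleGraph.Walk.eq_of_length_eq_zero hq
      exact ⟨_, h1, hr0 ▸ h2⟩


theorem bipartite_domNum_eq_smaller_side_characterization (G : SimpleGraph V)
    [DecidableRel G.Adj] (A B : Finset V) (hconn : G.Connected)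
    (hbip : IsBipartition G A B) (hA : 1 ≤ A.card) (hAB : A.card ≤ B.card) :
    domNum G = A.card ↔
      ((∀ v ∈ B, IsSupport G v →
          IsWeakSupport G v ∧ ∀ u, G.Adj v u → ¬ IsLeaf G u → IsSupport G u) ∧
       (∀ x ∈ A, ∀ y ∈ A, ¬ IsLeaf G x → ¬ IsSupport G x → ¬ IsLeaf G y → ¬ IsSupport G y →
          G.dist x y = 2 →
          ∃ xb ∈ B, ∃ yb ∈ B, xb ≠ yb ∧
            G.neighborFinset xb = {x, y} ∧ G.neighborFinset yb = {x, y})) := by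
  classical
  obtain ⟨hU, hdisj, hadjp⟩ := id hbip
  have memAorB : ∀ w : V, w ∈ A ∨ w ∈ B := fun w =>
    Finset.mem_union.mp (by rw [hU]; exact Finset.mem_univ w)
  have adjL : ∀ {u w : V}, G.Adj u w → w ∈ B → u ∈ A := by
    intro u w h hw
    rcases hadjp h with ⟨h1, _⟩ | ⟨_, h2⟩
    · exact h1
    · exact absurd hw (Finset.disjoint_left.mp hdisj h2)
  have adjR : ∀ {u w : V}, G.Adj u w → u ∈ B → w ∈ A := by
    intro u w h hu
    rcases hadjp h with ⟨h1, _⟩ | ⟨_, h2⟩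
    · exact absurd hu (Finset.disjoint_left.mp hdisj h1)
    · exact h2
  have adjLB : ∀ {u w : V}, G.Adj u w → w ∈ A → u ∈ B := by
    intro u w h hw
    rcases hadjp h with ⟨_, h2⟩ | ⟨h1, _⟩
    · exact absurd hw (Finset.disjoint_right.mp hdisj h2)
    · exact h1
  have hcard2 : 1 < Fintype.card V := by
    have hu2 : Fintype.card V = (A ∪ B).card := by rw [hU, Finset.card_univ]
    rw [Finset.card_union_of_disjoint hdisj] at hu2
    omega
  have hne : ∀ v : V, ∃ u, G.Adj u v := by
    intro v
    obtain ⟨w, hw⟩ := Fintype.exists_ne_of_one_lt_card hcard2 v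
    obtain ⟨p⟩ := hconn.preconnected v w
    cases p with
    | nil => exact absurd rfl hw
    | cons h q => exact ⟨_, h.symm⟩
  have hAdom : IsDomSet G A := by
    intro v hv
    have hvB : v ∈ B := (memAorB v).resolve_left hv
    obtain ⟨u, hu⟩ := hne v
    exact ⟨u, adjL hu hvB, hu⟩
  have hdomle : domNum G ≤ A.card := Nat.sInf_le ⟨A, hAdom, rfl⟩
  constructor
  · intro hγ
    have hsmall : ∀ D : Finset V, IsDomSet G D → D.card < A.card → False := by
      intro D hDd hlt
      have hmem : D.card ∈ {n | ∃ D : Finset V, IsDomSet G D ∧ D.card = n} :=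
        ⟨D, hDd, rfl⟩
      have h2 : domNum G ≤ D.card := Nat.sInf_le hmem
      rw [hγ] at h2
      omega
    constructor
    · intro v hvB hvS
      constructor
      · -- weak support
        by_contra hw
        obtain ⟨l0, hl0adj, hl0leaf⟩ := hvS
        have hl0mem : l0 ∈ (G.neighborFinset v).filter (fun l => G.degree l = 1) :=
          Finset.mem_filter.mpr ⟨(G.mem_neighborFinset _ _).mpr hl0adj, hl0leaf⟩
        have h2 : 1 < ((G.neighborFinset v).filter (fun l => G.degree l = 1)).card := by
          have h0 : ((G.neighborFinset v).filter (fun l => G.degree l = 1)).card ≠ 1 :=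
            fun h => hw h
          have h0' : 0 < ((G.neighborFinset v).filter (fun l => G.degree l = 1)).card :=
            Finset.card_pos.mpr ⟨l0, hl0mem⟩
          omega
        obtain ⟨l1, hl1, l2, hl2, hl12⟩ := Finset.one_lt_card.mp h2
        obtain ⟨hl1n, hl1d⟩ := Finset.mem_filter.mp hl1
        obtain ⟨hl2n, hl2d⟩ := Finset.mem_filter.mp hl2
        have hadjv1 : G.Adj v l1 := (G.mem_neighborFinset _ _).mp hl1n
        have hadjv2 : G.Adj v l2 := (G.mem_neighborFinset _ _).mp hl2n
        have hl1A : l1 ∈ A := adjR hadjv1 hvB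
        have hl2A : l2 ∈ A := adjR hadjv2 hvB
        have hsub : ({l1, l2} : Finset V) ⊆ A := by
          intro z hz
          simp only [Finset.mem_insert, Finset.mem_singleton] at hz
          rcases hz with rfl | rfl <;> assumption
        have hvnotin : v ∉ A \ ({l1, l2} : Finset V) :=
          fun h => (Finset.disjoint_right.mp hdisj hvB) (Finset.mem_sdiff.mp h).1
        have hA2 : 2 ≤ A.card := by
          calc 2 = ({l1, l2} : Finset V).card := (Finset.card_pair hl12).symm
          _ ≤ A.card := Finset.card_le_card hsub
        refine hsmall (insert v (A \ {l1, l2})) ?_ ?_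
        · intro w hwn
          have hwv : w ≠ v := fun h => hwn (h ▸ Finset.mem_insert_self _ _)
          have hwnot : w ∉ A \ ({l1, l2} : Finset V) :=
            fun h => hwn (Finset.mem_insert_of_mem h)
          rcases memAorB w with hwA | hwB
          · have hwl : w ∈ ({l1, l2} : Finset V) := by
              by_contra hc
              exact hwnot (Finset.mem_sdiff.mpr ⟨hwA, hc⟩)
            refine ⟨v, Finset.mem_insert_self _ _, ?_⟩
            simp only [Finset.mem_insert, Finset.mem_singleton] at hwl
            rcases hwl with rfl | rfl <;> assumption
          · obtain ⟨u, hu⟩ := hne w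
            have huA : u ∈ A := adjL hu hwB
            have hul1 : u ≠ l1 := by
              rintro rfl
              exact hwv (leaf_adj_unique hl1d hu hadjv1.symm)
            have hul2 : u ≠ l2 := by
              rintro rfl
              exact hwv (leaf_adj_unique hl2d hu hadjv2.symm)
            refine ⟨u, Finset.mem_insert_of_mem (Finset.mem_sdiff.mpr ⟨huA, ?_⟩), hu⟩
            simp [hul1, hul2]
        · rw [Finset.card_insert_of_notMem hvnotin, Finset.card_sdiff_of_subset hsub,
            Finset.card_pair hl12]
          omega
      · -- second part of (a)
        intro u0 hadjvu0 hu0nl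
        by_contra hu0ns
        obtain ⟨l0, hl0adj, hl0leaf⟩ := hvS
        have hl0A : l0 ∈ A := adjR hl0adj hvB
        have hu0A : u0 ∈ A := adjR hadjvu0 hvB
        have hlu : l0 ≠ u0 := fun h => hu0nl (h ▸ hl0leaf)
        have hsub : ({l0, u0} : Finset V) ⊆ A := by
          intro z hz
          simp only [Finset.mem_insert, Finset.mem_singleton] at hz
          rcases hz with rfl | rfl <;> assumption
        have hvnotin : v ∉ A \ ({l0, u0} : Finset V) :=
          fun h => (Finset.disjoint_right.mp hdisj hvB) (Finset.mem_sdiff.mp h).1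
        have hA2 : 2 ≤ A.card := by
          calc 2 = ({l0, u0} : Finset V).card := (Finset.card_pair hlu).symm
          _ ≤ A.card := Finset.card_le_card hsub
        refine hsmall (insert v (A \ {l0, u0})) ?_ ?_
        · intro w hwn
          have hwv : w ≠ v := fun h => hwn (h ▸ Finset.mem_insert_self _ _)
          have hwnot : w ∉ A \ ({l0, u0} : Finset V) :=
            fun h => hwn (Finset.mem_insert_of_mem h)
          rcases memAorB w with hwA | hwB
          · have hwl : w ∈ ({l0, u0} : Finset V) := by
              by_contra hc
              exact hwnot (Finset.mem_sdiff.mpr ⟨hwA, hc⟩)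
            refine ⟨v, Finset.mem_insert_self _ _, ?_⟩
            simp only [Finset.mem_insert, Finset.mem_singleton] at hwl
            rcases hwl with rfl | rfl <;> assumption
          · by_contra hno2
            push_neg at hno2
            have hallu : ∀ z, G.Adj w z → z = u0 := by
              intro z hz
              have hzA : z ∈ A := adjL hz.symm hwB
              have hznotin : z ∈ ({l0, u0} : Finset V) := by
                by_contra hc
                exact hno2 z (Finset.mem_insert_of_mem (Finset.mem_sdiff.mpr ⟨hzA, hc⟩)) hz.symm
              simp only [Finset.mem_insert, Finset.mem_singleton] at hznotin
              rcases hznotin with rfl | rfl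
              · exact absurd (leaf_adj_unique hl0leaf hz.symm hl0adj.symm) hwv
              · rfl
            obtain ⟨z0, hz0⟩ := hne w
            have hz0u : z0 = u0 := hallu z0 hz0.symm
            have hNw : G.neighborFinset w = {u0} := by
              ext z
              simp only [SimpleGraph.mem_neighborFinset, Finset.mem_singleton]
              exact ⟨fun h => hallu z h, fun h => h ▸ (hz0u ▸ hz0.symm)⟩
            have hwleaf : IsLeaf G w := by
              have : (G.neighborFinset w).card = 1 := by rw [hNw, Finset.card_singleton]
              rwa [G.card_neighborFinset_eq_degree] at this
            exact hu0ns ⟨w, (hz0u ▸ hz0 : G.Adj u0 w), hwleaf⟩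
        · rw [Finset.card_insert_of_notMem hvnotin, Finset.card_sdiff_of_subset hsub,
            Finset.card_pair hlu]
          omega
    · -- condition (b)
      intro x hxA y hyA hxl hxs hyl hys hdist
      by_contra hno
      push_neg at hno
      have hxy : x ≠ y := by
        intro h
        rw [h, SimpleGraph.dist_self] at hdist
        omega
      obtain ⟨m, hmx, hmy⟩ := exists_common_of_dist_two (hconn.preconnected x y) hdist
      have key : ∀ w' : V, G.Adj w' x → G.Adj w' y →
          (∀ b : V, b ≠ w' → G.neighborFinset b = {x, y} → False) → False := by
        intro w' hw'x hw'y huniq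
        have hw'B : w' ∈ B := adjLB hw'x hxA
        have hsub : ({x, y} : Finset V) ⊆ A := by
          intro z hz
          simp only [Finset.mem_insert, Finset.mem_singleton] at hz
          rcases hz with rfl | rfl <;> assumption
        have hvnotin : w' ∉ A \ ({x, y} : Finset V) :=
          fun h => (Finset.disjoint_right.mp hdisj hw'B) (Finset.mem_sdiff.mp h).1
        have hA2 : 2 ≤ A.card := by
          calc 2 = ({x, y} : Finset V).card := (Finset.card_pair hxy).symm
          _ ≤ A.card := Finset.card_le_card hsub
        refine hsmall (insert w' (A \ {x, y})) ?_ ?_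
        · intro w hwn
          have hwv : w ≠ w' := fun h => hwn (h ▸ Finset.mem_insert_self _ _)
          have hwnot : w ∉ A \ ({x, y} : Finset V) :=
            fun h => hwn (Finset.mem_insert_of_mem h)
          rcases memAorB w with hwA | hwB
          · have hwl : w ∈ ({x, y} : Finset V) := by
              by_contra hc
              exact hwnot (Finset.mem_sdiff.mpr ⟨hwA, hc⟩)
            refine ⟨w', Finset.mem_insert_self _ _, ?_⟩
            simp only [Finset.mem_insert, Finset.mem_singleton] at hwl
            rcases hwl with rfl | rfl <;> assumption
          · by_contra hno2
            push_neg at hno2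
            have hall : ∀ z, G.Adj w z → z = x ∨ z = y := by
              intro z hz
              have hzA : z ∈ A := adjL hz.symm hwB
              have hznotin : z ∈ ({x, y} : Finset V) := by
                by_contra hc
                exact hno2 z (Finset.mem_insert_of_mem (Finset.mem_sdiff.mpr ⟨hzA, hc⟩)) hz.symm
              simpa using hznotin
            have hxw : G.Adj w x := by
              by_contra hnadj
              have hally : ∀ z, G.Adj w z → z = y := by
                intro z hz
                rcases hall z hz with rfl | rfl
                · exact absurd hz hnadj
                · rfl
              obtain ⟨z0, hz0⟩ := hne w
              have hz0y : z0 = y := hally z0 hz0.symm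
              have hNw : G.neighborFinset w = {y} := by
                ext z
                simp only [SimpleGraph.mem_neighborFinset, Finset.mem_singleton]
                exact ⟨fun h => hally z h, fun h => h ▸ (hz0y ▸ hz0.symm)⟩
              have hwleaf : IsLeaf G w := by
                have : (G.neighborFinset w).card = 1 := by rw [hNw, Finset.card_singleton]
                rwa [G.card_neighborFinset_eq_degree] at this
              exact hys ⟨w, (hz0y ▸ hz0 : G.Adj y w), hwleaf⟩
            have hyw : G.Adj w y := by
              by_contra hnadj
              have hallx : ∀ z, G.Adj w z → z = x := by
                intro z hz
                rcases hall z hz with rfl | rfl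
                · rfl
                · exact absurd hz hnadj
              have hNw : G.neighborFinset w = {x} := by
                ext z
                simp only [SimpleGraph.mem_neighborFinset, Finset.mem_singleton]
                exact ⟨fun h => hallx z h, fun h => h ▸ hxw⟩
              have hwleaf : IsLeaf G w := by
                have : (G.neighborFinset w).card = 1 := by rw [hNw, Finset.card_singleton]
                rwa [G.card_neighborFinset_eq_degree] at this
              exact hxs ⟨w, hxw.symm, hwleaf⟩
            have hNw : G.neighborFinset w = {x, y} := by
              ext z
              simp only [SimpleGraph.mem_neighborFinset, Finset.mem_insert,
                Finset.mem_singleton]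
              constructor
              · exact fun h => hall z h
              · rintro (rfl | rfl)
                · exact hxw
                · exact hyw
            exact huniq w hwv hNw
        · rw [Finset.card_insert_of_notMem hvnotin, Finset.card_sdiff_of_subset hsub,
            Finset.card_pair hxy]
          omega
      by_cases hW : ∃ b : V, G.neighborFinset b = {x, y}
      · obtain ⟨w', hw'⟩ := hW
        have hw'x : G.Adj w' x := by
          rw [← SimpleGraph.mem_neighborFinset, hw']; simp
        have hw'y : G.Adj w' y := by
          rw [← SimpleGraph.mem_neighborFinset, hw']; simp
        have hw'B : w' ∈ B := adjLB hw'x hxA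
        refine key w' hw'x hw'y ?_
        intro b hbne hNb
        have hbx : G.Adj b x := by
          rw [← SimpleGraph.mem_neighborFinset, hNb]; simp
        have hbB : b ∈ B := adjLB hbx hxA
        exact hno b hbB w' hw'B hbne hNb hw'
      · refine key m hmx.symm hmy ?_
        intro b _ hNb
        exact hW ⟨b, hNb⟩
  · rintro ⟨hwa, hwb⟩
    refine le_antisymm hdomle ?_
    refine le_csInf ⟨A.card, A, hAdom, rfl⟩ ?_
    rintro n ⟨D, hD, rfl⟩
    exact aux_card_le G A B D hbip hwa hwb hD
end

section
/- Every connected bipartite graph G with bipartition (A,B), 1 ≤ |A| ≤ |B|, satisfying γ(G) = |A| also satisfies γ(G) = β(G). -/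
open Finset

variable {V : Type} [Fintype V] [DecidableEq V]

theorem domNum_eq_coverNum_of_domNum_eq_smaller_side (G : SimpleGraph V)
    (A B : Finset V) (hconn : G.Connected) (hbip : IsBipartition G A B)
    (hA : 1 ≤ A.card) (hAB : A.card ≤ B.card) (hdom : domNum G = A.card) :
    domNum G = coverNum G := by
  obtain ⟨hU, hD, hE⟩ := hbip
  obtain ⟨a, ha⟩ := Finset.card_pos.mp hA
  obtain ⟨b, hb⟩ := Finset.card_pos.mp (lt_of_lt_of_le hA hAB)
  have hab : a ≠ b := fun h => (Finset.disjoint_left.mp hD ha) (h ▸ hb)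
  -- every vertex has a neighbor
  have hnbr : ∀ v : V, ∃ u, G.Adj v u := by
    intro v
    obtain ⟨w, hw⟩ : ∃ w, w ≠ v := by
      by_cases h : v = a
      · exact ⟨b, fun hbv => hab (h ▸ hbv.symm)⟩
      · exact ⟨a, fun hav => h hav.symm⟩
    obtain ⟨p⟩ := hconn.preconnected v w
    cases p with
    | nil => exact absurd rfl hw
    | cons h _ => exact ⟨_, h⟩
  -- A is a vertex cover
  have hcovA : IsVertexCover G A := by
    intro u v huv
    rcases hE huv with ⟨h1, _⟩ | ⟨_, h2⟩
    · exact Or.inl h1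
    · exact Or.inr h2
  have hcovle : coverNum G ≤ A.card := Nat.sInf_le ⟨A, hcovA, rfl⟩
  -- a minimum vertex cover exists
  obtain ⟨C, hC, hCcard⟩ :=
    Nat.sInf_mem (⟨A.card, A, hcovA, rfl⟩ :
      Set.Nonempty {n | ∃ C : Finset V, IsVertexCover G C ∧ C.card = n})
  -- every vertex cover is a dominating set
  have hCdom : IsDomSet G C := by
    intro v hv
    obtain ⟨u, hu⟩ := hnbr v
    rcases hC hu with h | h
    · exact absurd h hv
    · exact ⟨u, h, hu.symm⟩
  have hdomle : domNum G ≤ coverNum G := by rw [coverNum, ← hCcard]; exact Nat.sInf_le ⟨C, hCdom, rfl⟩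
  omega
end

section
/- Let G be a connected bipartite graph with bipartition (A,B) and |A| = |B| ≥ 1. Then γ(G) = |A| if and only if G is the 4-cycle C₄ or G is the corona F ∘ K₁ of some connected bipartite graph F. -/
open Finset

variable {V : Type} [Fintype V] [DecidableEq V]

def corona {W : Type} (F : SimpleGraph W) : SimpleGraph (W ⊕ W) where
  Adj x y :=
    match x, y with
    | Sum.inl u, Sum.inl v => F.Adj u v
    | Sum.inl u, Sum.inr v => u = v
    | Sum.inr u, Sum.inl v => u = v
    | Sum.inr _, Sum.inr _ => False
  symm := by
    constructor
    intro x y h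
    cases x <;> cases y <;> simp_all <;> exact h.symm
  loopless := by
    constructor
    intro x
    cases x <;> simp


set_option linter.unusedSectionVars false
set_option linter.unusedVariables false
set_option maxHeartbeats 2000000

/-- Reachability using only edges with both endpoints in `s`. -/
def ReachIn (G : SimpleGraph V) (s : Finset V) : V → V → Prop :=
  Relation.ReflTransGen (fun a b => a ∈ s ∧ b ∈ s ∧ G.Adj a b)

def ConnIn (G : SimpleGraph V) (s : Finset V) : Prop :=
  s.Nonempty ∧ ∀ a ∈ s, ∀ b ∈ s, ReachIn G s a b

def Dom (G : SimpleGraph V) (s D : Finset V) : Prop :=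
  D ⊆ s ∧ ∀ v ∈ s, v ∉ D → ∃ u ∈ D, G.Adj u v

noncomputable def gam (G : SimpleGraph V) (s : Finset V) : ℕ :=
  sInf {n | ∃ D, Dom G s D ∧ D.card = n}

lemma dom_self (G : SimpleGraph V) (s : Finset V) : Dom G s s :=
  ⟨subset_rfl, fun v hv hv' => absurd hv hv'⟩

lemma gam_set_nonempty (G : SimpleGraph V) (s : Finset V) :
    {n | ∃ D, Dom G s D ∧ D.card = n}.Nonempty := ⟨s.card, s, dom_self G s, rfl⟩

lemma gam_le {G : SimpleGraph V} {s D : Finset V} (h : Dom G s D) : gam G s ≤ D.card :=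
  Nat.sInf_le ⟨D, h, rfl⟩

lemma exists_minDom (G : SimpleGraph V) (s : Finset V) :
    ∃ D, Dom G s D ∧ D.card = gam G s := Nat.sInf_mem (gam_set_nonempty G s)

lemma reachIn_refl (G : SimpleGraph V) (s : Finset V) (a : V) : ReachIn G s a a :=
  Relation.ReflTransGen.refl

lemma reachIn_trans {G : SimpleGraph V} {s : Finset V} {a b c : V}
    (h : ReachIn G s a b) (h' : ReachIn G s b c) : ReachIn G s a c :=
  Relation.ReflTransGen.trans h h'

lemma reachIn_symm {G : SimpleGraph V} {s : Finset V} {a b : V}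
    (h : ReachIn G s a b) : ReachIn G s b a := by
  induction h with
  | refl => exact Relation.ReflTransGen.refl
  | tail _ h2 ih =>
    exact Relation.ReflTransGen.trans
      (Relation.ReflTransGen.single ⟨h2.2.1, h2.1, h2.2.2.symm⟩) ih

lemma reachIn_mono {G : SimpleGraph V} {s t : Finset V} (hst : s ⊆ t) {a b : V}
    (h : ReachIn G s a b) : ReachIn G t a b := by
  refine Relation.ReflTransGen.mono ?_ _ _ h
  exact fun x y hxy => ⟨hst hxy.1, hst hxy.2.1, hxy.2.2⟩

lemma reachIn_mono_graph {G G' : SimpleGraph V} {s : Finset V}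
    (hGG : ∀ a b, G'.Adj a b → G.Adj a b) {a b : V}
    (h : ReachIn G' s a b) : ReachIn G s a b := by
  refine Relation.ReflTransGen.mono ?_ _ _ h
  exact fun x y hxy => ⟨hxy.1, hxy.2.1, hGG _ _ hxy.2.2⟩

lemma reachIn_mem_right {G : SimpleGraph V} {s : Finset V} {a b : V}
    (h : ReachIn G s a b) (hne : a ≠ b) : b ∈ s := by
  induction h with
  | refl => exact absurd rfl hne
  | tail _ h2 _ => exact h2.2.1

lemma reachIn_head {G : SimpleGraph V} {s : Finset V} {a b : V}
    (h : ReachIn G s a b) (hne : a ≠ b) :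
    ∃ c, c ∈ s ∧ G.Adj a c ∧ ReachIn G s c b := by
  rcases Relation.ReflTransGen.cases_head h with h | ⟨c, hc, hcb⟩
  · exact absurd h hne
  · exact ⟨c, hc.2.1, hc.2.2, hcb⟩

/-- A connected set of size ≥ 2 has no isolated vertices. -/
lemma connIn_no_isolated {G : SimpleGraph V} {s : Finset V} (hc : ConnIn G s)
    (h2 : 2 ≤ s.card) : ∀ v ∈ s, ∃ w ∈ s, G.Adj v w := by
  intro v hv
  obtain ⟨w, hw, hwv⟩ : ∃ w ∈ s, w ≠ v := by
    by_contra hcon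
    push_neg at hcon
    have : s ⊆ {v} := fun x hx => mem_singleton.2 (hcon x hx)
    have := card_le_card this
    simp at this; omega
  obtain ⟨c, hc1, hc2, _⟩ := reachIn_head (hc.2 v hv w hw) (Ne.symm hwv)
  exact ⟨c, hc1, hc2⟩

/-- If there are no crossing edges from `t ⊆ s` to `s \ t`, reachability cannot leave `t`. -/
lemma reachIn_stay {G : SimpleGraph V} {s t : Finset V} {a b : V}
    (hcross : ∀ x ∈ t, ∀ y ∈ s, y ∉ t → ¬ G.Adj x y)
    (ha : a ∈ t) (h : ReachIn G s a b) : b ∈ t := by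
  induction h with
  | refl => exact ha
  | tail h1 h2 ih =>
    by_contra hb
    exact hcross _ ih _ h2.2.1 hb h2.2.2

/-- Ore's lemma, relative version: a set without isolated vertices has domination
number at most half its size. -/
lemma ore {G : SimpleGraph V} {s : Finset V}
    (hiso : ∀ v ∈ s, ∃ w ∈ s, G.Adj v w) : 2 * gam G s ≤ s.card := by
  obtain ⟨D, hD, hcard⟩ := exists_minDom G s
  -- every vertex of D has a neighbour in s \ D
  have key : ∀ v ∈ D, ∃ w ∈ s, w ∉ D ∧ G.Adj v w := by
    intro v hv
    by_contra hcon
    push_neg at hcon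
    have hdom : Dom G s (D.erase v) := by
      constructor
      · exact Finset.Subset.trans (erase_subset v D) hD.1
      · intro w hw hw'
        by_cases hwD : w ∈ D
        · have hwv : w = v := by
            by_contra h
            exact hw' (mem_erase.2 ⟨h, hwD⟩)
          subst hwv
          obtain ⟨z, hz, hadj⟩ := hiso w (hD.1 hv)
          have hzD : z ∈ D := by
            by_contra hzD
            exact hcon z hz hzD hadj
          refine ⟨z, mem_erase.2 ⟨fun h => ?_, hzD⟩, hadj.symm⟩
          subst h; exact G.irrefl hadj
        · obtain ⟨u, huD, hadj⟩ := hD.2 w hw hwD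
          refine ⟨u, mem_erase.2 ⟨fun h => ?_, huD⟩, hadj⟩
          subst h
          exact hcon w hw hwD hadj
    have h1 : gam G s ≤ (D.erase v).card := gam_le hdom
    have h2 : (D.erase v).card = D.card - 1 := card_erase_of_mem hv
    have h3 : 1 ≤ D.card := card_pos.2 ⟨v, hv⟩
    omega
  -- then s \ D dominates s
  have hdom' : Dom G s (s \ D) := by
    constructor
    · exact sdiff_subset
    · intro v hv hv'
      have hvD : v ∈ D := by
        by_contra h
        exact hv' (mem_sdiff.2 ⟨hv, h⟩)
      obtain ⟨w, hw, hwD, hadj⟩ := key v hvD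
      exact ⟨w, mem_sdiff.2 ⟨hw, hwD⟩, hadj.symm⟩
  have h1 : gam G s ≤ (s \ D).card := gam_le hdom'
  have h2 : (s \ D).card = s.card - D.card := card_sdiff_of_subset hD.1
  have h3 : D.card ≤ s.card := card_le_card hD.1
  omega

-- components
noncomputable def Cpt (G : SimpleGraph V) (s : Finset V) (v : V) : Finset V :=
  @Finset.filter _ (fun w => ReachIn G s v w) (Classical.decPred _) s

lemma mem_cmp {G : SimpleGraph V} {s : Finset V} {v w : V} :
    w ∈ Cpt G s v ↔ w ∈ s ∧ ReachIn G s v w :=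
  @Finset.mem_filter _ _ (Classical.decPred _) _ _

lemma cmp_subset {G : SimpleGraph V} {s : Finset V} {v : V} : Cpt G s v ⊆ s :=
  @Finset.filter_subset _ _ (Classical.decPred _) _

lemma self_mem_cmp {G : SimpleGraph V} {s : Finset V} {v : V} (hv : v ∈ s) :
    v ∈ Cpt G s v := mem_cmp.2 ⟨hv, reachIn_refl G s v⟩

lemma cmp_eq_of_mem {G : SimpleGraph V} {s : Finset V} {v w : V} (h : w ∈ Cpt G s v) :
    Cpt G s w = Cpt G s v := by
  rcases mem_cmp.1 h with ⟨hws, hr⟩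
  ext z
  simp only [mem_cmp]
  constructor
  · rintro ⟨hz, hr2⟩; exact ⟨hz, reachIn_trans hr hr2⟩
  · rintro ⟨hz, hr2⟩; exact ⟨hz, reachIn_trans (reachIn_symm hr) hr2⟩

lemma adj_mem_cmp {G : SimpleGraph V} {s : Finset V} {v a b : V}
    (ha : a ∈ Cpt G s v) (hb : b ∈ s) (hadj : G.Adj a b) : b ∈ Cpt G s v := by
  rcases mem_cmp.1 ha with ⟨has, hr⟩
  exact mem_cmp.2 ⟨hb, reachIn_trans hr (Relation.ReflTransGen.single ⟨has, hb, hadj⟩)⟩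

/-- No edges leave a component. -/
lemma cmp_no_cross {G : SimpleGraph V} {s : Finset V} {v : V} :
    ∀ x ∈ Cpt G s v, ∀ y ∈ s, y ∉ Cpt G s v → ¬ G.Adj x y := by
  intro x hx y hy hy' hadj
  exact hy' (adj_mem_cmp hx hy hadj)

lemma reachIn_cmp_self {G : SimpleGraph V} {s : Finset V} {v w : V}
    (h : ReachIn G s v w) : ReachIn G (Cpt G s v) v w := by
  induction h with
  | refl => exact reachIn_refl _ _ _
  | @tail b c h1 h2 ih =>
    refine reachIn_trans ih (Relation.ReflTransGen.single ⟨?_, ?_, h2.2.2⟩)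
    · exact mem_cmp.2 ⟨h2.1, h1⟩
    · exact mem_cmp.2 ⟨h2.2.1, Relation.ReflTransGen.tail h1 h2⟩

lemma connIn_cmp {G : SimpleGraph V} {s : Finset V} {v : V} (hv : v ∈ s) :
    ConnIn G (Cpt G s v) := by
  refine ⟨⟨v, self_mem_cmp hv⟩, fun a ha b hb => ?_⟩
  rcases mem_cmp.1 ha with ⟨_, hra⟩
  rcases mem_cmp.1 hb with ⟨_, hrb⟩
  exact reachIn_trans (reachIn_symm (reachIn_cmp_self hra)) (reachIn_cmp_self hrb)

/-- the set of components of `s` -/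
noncomputable def comps (G : SimpleGraph V) (s : Finset V) : Finset (Finset V) :=
  s.image (Cpt G s)

lemma comps_disj {G : SimpleGraph V} {s : Finset V} :
    ∀ x ∈ comps G s, ∀ y ∈ comps G s, x ≠ y → Disjoint x y := by
  intro x hx y hy hxy
  rcases Finset.mem_image.1 hx with ⟨a, ha, rfl⟩
  rcases Finset.mem_image.1 hy with ⟨b, hb, rfl⟩
  rw [Finset.disjoint_left]
  intro w hwa hwb
  exact hxy ((cmp_eq_of_mem hwa).symm.trans (cmp_eq_of_mem hwb))

lemma comps_biUnion {G : SimpleGraph V} {s : Finset V} :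
    (comps G s).biUnion (fun t => t) = s := by
  ext w
  simp only [Finset.mem_biUnion, comps, Finset.mem_image]
  constructor
  · rintro ⟨t, ⟨a, ha, rfl⟩, hw⟩; exact cmp_subset hw
  · intro hw; exact ⟨Cpt G s w, ⟨w, hw, rfl⟩, self_mem_cmp hw⟩

lemma comps_card_sum {G : SimpleGraph V} {s : Finset V} :
    ∑ t ∈ comps G s, t.card = s.card := by
  conv_rhs => rw [← comps_biUnion (G := G) (s := s)]
  rw [Finset.card_biUnion comps_disj]

lemma mem_comps_nonempty {G : SimpleGraph V} {s t : Finset V} (h : t ∈ comps G s) :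
    t.Nonempty := by
  rcases Finset.mem_image.1 h with ⟨a, ha, rfl⟩
  exact ⟨a, self_mem_cmp ha⟩

lemma mem_comps_subset {G : SimpleGraph V} {s t : Finset V} (h : t ∈ comps G s) : t ⊆ s := by
  rcases Finset.mem_image.1 h with ⟨a, _, rfl⟩
  exact cmp_subset

lemma mem_comps_connIn {G : SimpleGraph V} {s t : Finset V} (h : t ∈ comps G s) :
    ConnIn G t := by
  rcases Finset.mem_image.1 h with ⟨a, ha, rfl⟩
  exact connIn_cmp ha

lemma cmp_mem_comps {G : SimpleGraph V} {s : Finset V} {v : V} (hv : v ∈ s) :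
    Cpt G s v ∈ comps G s := Finset.mem_image.2 ⟨v, hv, rfl⟩

lemma mem_comps_no_cross {G : SimpleGraph V} {s t : Finset V} (h : t ∈ comps G s) :
    ∀ x ∈ t, ∀ y ∈ s, y ∉ t → ¬ G.Adj x y := by
  rcases Finset.mem_image.1 h with ⟨a, _, rfl⟩
  exact cmp_no_cross

noncomputable def minDom (G : SimpleGraph V) (s : Finset V) : Finset V :=
  Classical.choose (exists_minDom G s)

lemma minDom_dom (G : SimpleGraph V) (s : Finset V) : Dom G s (minDom G s) :=
  (Classical.choose_spec (exists_minDom G s)).1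

lemma minDom_card (G : SimpleGraph V) (s : Finset V) : (minDom G s).card = gam G s :=
  (Classical.choose_spec (exists_minDom G s)).2

/-- induced-C4 structure on `s` -/
def C4S (G : SimpleGraph V) (s : Finset V) : Prop :=
  ∃ a b c d : V, s = {a, b, c, d} ∧ a ≠ c ∧ b ≠ d ∧
    G.Adj a b ∧ G.Adj b c ∧ G.Adj c d ∧ G.Adj d a ∧ ¬ G.Adj a c ∧ ¬ G.Adj b d

/-- corona structure on `s`: a connected support set `S`, each support `v` has a
pendant leaf `f v` (with unique neighbour `v` inside `s`), and the leaves are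
exactly `s \ S`. -/
def CorS (G : SimpleGraph V) (s : Finset V) : Prop :=
  ∃ (S : Finset V) (f : V → V),
    S ⊆ s ∧ ConnIn G S ∧
    (∀ v ∈ S, f v ∈ s ∧ f v ∉ S ∧ G.Adj v (f v) ∧ ∀ w ∈ s, G.Adj w (f v) → w = v) ∧
    (∀ v ∈ S, ∀ w ∈ S, f v = f w → v = w) ∧
    (∀ w ∈ s, w ∉ S → ∃ v ∈ S, f v = w)

lemma C4S_card {G : SimpleGraph V} {s : Finset V} (h : C4S G s) : s.card = 4 := by
  obtain ⟨a, b, c, d, rfl, hac, hbd, hab, hbc, hcd, hda, _, _⟩ := h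
  have h1 : a ≠ b := hab.ne
  have h2 : b ≠ c := hbc.ne
  have h3 : c ≠ d := hcd.ne
  have h4 : d ≠ a := hda.ne
  rw [card_insert_of_notMem, card_insert_of_notMem, card_insert_of_notMem, card_singleton]
  · simp only [mem_singleton]; exact h3
  · simp only [mem_insert, mem_singleton]; push_neg; exact ⟨h2, hbd⟩
  · simp only [mem_insert, mem_singleton]; push_neg; exact ⟨h1, hac, fun h => h4 h.symm⟩

/-- For the C4, given any vertex `z` there is an "opposite" vertex `w` dominating
everything except possibly `z`. -/
lemma C4S_opp {G : SimpleGraph V} {s : Finset V} (h : C4S G s) {z : V} (hz : z ∈ s) :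
    ∃ w ∈ s, ∀ y ∈ s, y = z ∨ y = w ∨ G.Adj w y := by
  obtain ⟨a, b, c, d, rfl, hac, hbd, hab, hbc, hcd, hda, _, _⟩ := h
  simp only [mem_insert, mem_singleton] at hz ⊢
  rcases hz with rfl | rfl | rfl | rfl
  · refine ⟨c, by tauto, ?_⟩
    intro y hy
    rcases hy with rfl | rfl | rfl | rfl
    · tauto
    · exact Or.inr (Or.inr hbc.symm)
    · tauto
    · exact Or.inr (Or.inr hcd)
  · refine ⟨d, by tauto, ?_⟩
    intro y hy
    rcases hy with rfl | rfl | rfl | rfl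
    · exact Or.inr (Or.inr hda)
    · tauto
    · exact Or.inr (Or.inr hcd.symm)
    · tauto
  · refine ⟨a, by tauto, ?_⟩
    intro y hy
    rcases hy with rfl | rfl | rfl | rfl
    · tauto
    · exact Or.inr (Or.inr hab)
    · tauto
    · exact Or.inr (Or.inr hda.symm)
  · refine ⟨b, by tauto, ?_⟩
    intro y hy
    rcases hy with rfl | rfl | rfl | rfl
    · exact Or.inr (Or.inr hab.symm)
    · tauto
    · exact Or.inr (Or.inr hbc)
    · tauto

/-- In a corona structure, the supports have the same cardinality as the leaves. -/
lemma CorS_card {G : SimpleGraph V} {s S : Finset V} {f : V → V}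
    (hS : S ⊆ s) (hleaf : ∀ v ∈ S, f v ∈ s ∧ f v ∉ S ∧ G.Adj v (f v) ∧
      ∀ w ∈ s, G.Adj w (f v) → w = v)
    (hinj : ∀ v ∈ S, ∀ w ∈ S, f v = f w → v = w)
    (hsurj : ∀ w ∈ s, w ∉ S → ∃ v ∈ S, f v = w) :
    S.card = (s \ S).card ∧ 2 * S.card = s.card := by
  have h1 : S.card = (s \ S).card := by
    apply Finset.card_bij (fun v _ => f v)
    · intro v hv
      exact mem_sdiff.2 ⟨(hleaf v hv).1, (hleaf v hv).2.1⟩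
    · intro v hv w hw hfvw
      exact hinj v hv w hw hfvw
    · intro w hw
      rcases mem_sdiff.1 hw with ⟨hw1, hw2⟩
      obtain ⟨v, hv, hfv⟩ := hsurj w hw1 hw2
      exact ⟨v, hv, hfv⟩
  constructor
  · exact h1
  · have := card_sdiff_of_subset hS
    have := card_le_card hS
    omega

/-- Stronger confinement: if no edges leave `t` (within `s`), reachability from a
vertex of `t` stays in `t`. -/
lemma reachIn_confine {G : SimpleGraph V} {s t : Finset V} {a b : V}
    (hcross : ∀ x ∈ t, ∀ y ∈ s, y ∉ t → ¬ G.Adj x y)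
    (ha : a ∈ t) (h : ReachIn G s a b) : b ∈ t ∧ ReachIn G t a b := by
  induction h with
  | refl => exact ⟨ha, reachIn_refl G t a⟩
  | @tail b' c h1 h2 ih =>
    have hb' : b' ∈ t := ih.1
    have hc : c ∈ t := by
      by_contra hc
      exact hcross _ hb' _ h2.2.1 hc h2.2.2
    exact ⟨hc, reachIn_trans ih.2 (Relation.ReflTransGen.single ⟨hb', hc, h2.2.2⟩)⟩

noncomputable def edgesIn (G : SimpleGraph V) (s : Finset V) : Finset (V × V) :=
  @Finset.filter _ (fun p => G.Adj p.1 p.2) (Classical.decPred _) (s ×ˢ s)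

lemma mem_edgesIn {G : SimpleGraph V} {s : Finset V} {p : V × V} :
    p ∈ edgesIn G s ↔ (p.1 ∈ s ∧ p.2 ∈ s) ∧ G.Adj p.1 p.2 := by
  rw [edgesIn, @Finset.mem_filter _ _ (Classical.decPred _), Finset.mem_product]

lemma edgesIn_mono_set {G : SimpleGraph V} {s t : Finset V} (h : t ⊆ s) :
    edgesIn G t ⊆ edgesIn G s := by
  intro p hp
  rw [mem_edgesIn] at hp ⊢
  exact ⟨⟨h hp.1.1, h hp.1.2⟩, hp.2⟩

lemma edgesIn_mono_graph {G G' : SimpleGraph V} {s : Finset V}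
    (h : ∀ a b, G'.Adj a b → G.Adj a b) : edgesIn G' s ⊆ edgesIn G s := by
  intro p hp
  rw [mem_edgesIn] at hp ⊢
  exact ⟨hp.1, h _ _ hp.2⟩

/-- double leaves at a common support vertex are impossible when `2γ = |s|`. -/
lemma two_leaves_false {G : SimpleGraph V} {s : Finset V} {u x v : V}
    (hgam : 2 * gam G s = s.card)
    (hiso : ∀ w ∈ s, ∃ z ∈ s, G.Adj w z)
    (hx : x ∈ s) (hv : v ∈ s) (hu : u ∈ s) (hxv : x ≠ v)
    (hux : ∀ w ∈ s, G.Adj w x → w = u) (huv : ∀ w ∈ s, G.Adj w v → w = u)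
    (hadjx : G.Adj u x) (hadjv : G.Adj u v) : False := by
  classical
  set s'' := s.erase v with hs''
  have hxs'' : x ∈ s'' := mem_erase.2 ⟨hxv, hx⟩
  have hus'' : u ∈ s'' := mem_erase.2 ⟨fun h => G.irrefl (h ▸ hadjv), hu⟩
  have hiso'' : ∀ w ∈ s'', ∃ z ∈ s'', G.Adj w z := by
    intro w hw
    rcases mem_erase.1 hw with ⟨hwv, hws⟩
    by_cases hwu : w = u
    · exact ⟨x, hxs'', hwu ▸ hadjx⟩
    · obtain ⟨z, hz, hadj⟩ := hiso w hws
      have hzv : z ≠ v := by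
        intro h
        exact hwu (huv w hws (h ▸ hadj))
      exact ⟨z, mem_erase.2 ⟨hzv, hz⟩, hadj⟩
  have hore := ore hiso''
  obtain ⟨D'', hD'', hcard''⟩ := exists_minDom G s''
  -- u or x belongs to D''
  have hor : u ∈ D'' ∨ x ∈ D'' := by
    by_contra hcon
    push_neg at hcon
    obtain ⟨w, hw, hadj⟩ := hD''.2 x hxs'' hcon.2
    have := hux w (mem_erase.1 (hD''.1 hw)).2 hadj
    exact hcon.1 (this ▸ hw)
  set D3 := insert u (D''.erase x) with hD3
  have hD3sub : D3 ⊆ s := by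
    intro w hw
    rcases mem_insert.1 hw with rfl | hw
    · exact hu
    · exact (mem_erase.1 (hD''.1 (mem_of_mem_erase hw))).2
  have hD3dom : Dom G s D3 := by
    refine ⟨hD3sub, ?_⟩
    intro w hw hwD3
    have hwu : w ≠ u := fun h => hwD3 (h ▸ mem_insert_self u _)
    by_cases hwv : w = v
    · exact ⟨u, mem_insert_self u _, hwv ▸ hadjv⟩
    · have hws'' : w ∈ s'' := mem_erase.2 ⟨hwv, hw⟩
      by_cases hwD'' : w ∈ D''
      · -- then w = x
        have hwx : w = x := by
          by_contra h
          exact hwD3 (mem_insert.2 (Or.inr (mem_erase.2 ⟨h, hwD''⟩)))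
        exact ⟨u, mem_insert_self u _, hwx ▸ hadjx⟩
      · obtain ⟨d, hd, hadj⟩ := hD''.2 w hws'' hwD''
        have hdx : d ≠ x := by
          intro h
          exact hwu (hux w hw (h ▸ hadj).symm)
        exact ⟨d, mem_insert.2 (Or.inr (mem_erase.2 ⟨hdx, hd⟩)), hadj⟩
  have hcardD3 : D3.card ≤ D''.card := by
    by_cases hxD : x ∈ D''
    · calc D3.card ≤ (D''.erase x).card + 1 := card_insert_le _ _
        _ = D''.card - 1 + 1 := by rw [card_erase_of_mem hxD]
        _ ≤ D''.card := by
            have : 1 ≤ D''.card := card_pos.2 ⟨x, hxD⟩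
            omega
    · have hu'' : u ∈ D'' := hor.resolve_right hxD
      have : D''.erase x = D'' := erase_eq_of_notMem hxD
      rw [hD3, this, insert_eq_self.2 hu'']
  have h1 : gam G s ≤ D3.card := gam_le hD3dom
  have h2 : s''.card = s.card - 1 := card_erase_of_mem hv
  have h3 : 1 ≤ s.card := card_pos.2 ⟨v, hv⟩
  omega

/-- Main lemma, case of a pendant vertex `x` with support `u`. -/
lemma caseA {N : ℕ} {G : SimpleGraph V} {s : Finset V}
    (ih : ∀ (G' : SimpleGraph V) (t : Finset V), t.card + (edgesIn G' t).card ≤ N →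
      ConnIn G' t → 2 * gam G' t = t.card → 2 ≤ t.card → C4S G' t ∨ CorS G' t)
    (hN : s.card + (edgesIn G s).card ≤ N + 1)
    (hconn : ConnIn G s) (hgam : 2 * gam G s = s.card) (h2 : 2 ≤ s.card)
    {x u : V} (hx : x ∈ s) (hu : u ∈ s) (huxadj : G.Adj u x)
    (hux : ∀ w ∈ s, G.Adj w x → w = u) : CorS G s := by
  classical
  have hne : u ≠ x := huxadj.ne
  have hiso := connIn_no_isolated hconn h2
  by_cases hn2 : s.card = 2
  · -- base case : s = {u, x}
    have hsub : ({u, x} : Finset V) ⊆ s := by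
      intro w hw; rcases mem_insert.1 hw with rfl | hw
      · exact hu
      · exact (mem_singleton.1 hw) ▸ hx
    have hcard : ({u, x} : Finset V).card = 2 := card_pair hne
    have hse : s = {u, x} := (Finset.eq_of_subset_of_card_le hsub (by omega)).symm
    refine ⟨{u}, fun _ => x, ?_, ?_, ?_, ?_, ?_⟩
    · intro w hw; rw [mem_singleton.1 hw]; exact hu
    · exact ⟨⟨u, mem_singleton_self u⟩, fun a ha b hb => by
        rw [mem_singleton.1 ha, mem_singleton.1 hb]; exact reachIn_refl G _ u⟩
    · intro v hv
      rw [mem_singleton.1 hv]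
      exact ⟨hx, by simp [Ne.symm hne], huxadj, hux⟩
    · intro v hv w hw _; rw [mem_singleton.1 hv, mem_singleton.1 hw]
    · intro w hw hwu
      refine ⟨u, mem_singleton_self u, ?_⟩
      rw [hse] at hw
      rcases mem_insert.1 hw with h | h
      · exact absurd (mem_singleton.2 h) hwu
      · exact (mem_singleton.1 h).symm
  -- now s.card ≥ 4 (it is even)
  have hn4 : 4 ≤ s.card := by omega
  set s' := s \ {u, x} with hs'def
  have hus' : u ∉ s' := by simp [hs'def]
  have hxs' : x ∉ s' := by simp [hs'def]
  have hmem_s' : ∀ {w}, w ∈ s' ↔ w ∈ s ∧ w ≠ u ∧ w ≠ x := by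
    intro w
    simp [hs'def, mem_sdiff, not_or]
  have hs'sub : s' ⊆ s := sdiff_subset
  have huxsub : ({u, x} : Finset V) ⊆ s := by
    intro w hw; rcases mem_insert.1 hw with rfl | hw
    · exact hu
    · exact (mem_singleton.1 hw) ▸ hx
  have hs'card : s'.card = s.card - 2 := by
    rw [hs'def, card_sdiff_of_subset huxsub, card_pair hne]
  -- every vertex of s' has a neighbour in s'
  have hs'nbr : ∀ v ∈ s', ∃ w ∈ s', G.Adj v w := by
    intro v hv
    rcases hmem_s'.1 hv with ⟨hvs, hvu, hvx⟩
    by_contra hcon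
    push_neg at hcon
    have hall : ∀ z ∈ s, G.Adj z v → z = u := by
      intro z hz hadj
      by_contra hzu
      have hzx : z ≠ x := by
        intro h
        exact hvu (hux v hvs (h ▸ hadj).symm)
      exact hcon z (hmem_s'.2 ⟨hz, hzu, hzx⟩) hadj.symm
    have huvadj : G.Adj u v := by
      obtain ⟨z, hz, hadj⟩ := hiso v hvs
      have := hall z hz hadj.symm
      exact this ▸ hadj.symm
    exact two_leaves_false hgam hiso hx hvs hu (Ne.symm hvx) hux hall huxadj huvadj
  set CP := comps G s' with hCPdef
  have hCptEq : ∀ t ∈ CP, ∀ v ∈ t, Cpt G s' v = t := by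
    intro t ht v hv
    rcases Finset.mem_image.1 ht with ⟨a, _, rfl⟩
    exact cmp_eq_of_mem hv
  have hcompnbr : ∀ t ∈ CP, ∀ v ∈ t, ∃ w ∈ t, G.Adj v w := by
    intro t ht v hv
    obtain ⟨w, hw, hadj⟩ := hs'nbr v (mem_comps_subset ht hv)
    refine ⟨w, ?_, hadj⟩
    by_contra hwt
    exact mem_comps_no_cross ht v hv w hw hwt hadj
  have ht2 : ∀ t ∈ CP, 2 ≤ t.card := by
    intro t ht
    obtain ⟨a, ha⟩ := mem_comps_nonempty ht
    obtain ⟨w, hw, hadj⟩ := hcompnbr t ht a ha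
    exact Finset.one_lt_card.2 ⟨a, ha, w, hw, hadj.ne⟩
  have hucomp : ∀ t ∈ CP, ∃ w ∈ t, G.Adj u w := by
    intro t ht
    by_contra hcon
    push_neg at hcon
    have hcross : ∀ p ∈ t, ∀ q ∈ s, q ∉ t → ¬ G.Adj p q := by
      intro p hp q hq hqt hadj
      have hps' : p ∈ s' := mem_comps_subset ht hp
      by_cases hqu : q = u
      · exact hcon p hp (hqu ▸ hadj).symm
      by_cases hqx : q = x
      · have := hux p (hs'sub hps') (hqx ▸ hadj)
        exact hus' (this ▸ hps')
      · exact mem_comps_no_cross ht p hp q (hmem_s'.2 ⟨hq, hqu, hqx⟩) hqt hadj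
    obtain ⟨a, ha⟩ := mem_comps_nonempty ht
    have := (reachIn_confine hcross ha (hconn.2 a (hs'sub (mem_comps_subset ht ha)) u hu)).1
    exact hus' (mem_comps_subset ht this)
  -- γ(s) ≤ 1 + ∑ γ(components)
  have hdomglue : gam G s ≤ 1 + ∑ t ∈ CP, gam G t := by
    set D := insert u (CP.biUnion (fun t => minDom G t)) with hD
    have hDsub : D ⊆ s := by
      intro w hw
      rcases mem_insert.1 hw with rfl | hw
      · exact hu
      · obtain ⟨t, ht, hwt⟩ := Finset.mem_biUnion.1 hw
        exact hs'sub (mem_comps_subset ht ((minDom_dom G t).1 hwt))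
    have hDdom : Dom G s D := by
      refine ⟨hDsub, ?_⟩
      intro w hw hwD
      have hwu : w ≠ u := fun h => hwD (by rw [h]; exact mem_insert_self u _)
      by_cases hwx : w = x
      · exact ⟨u, mem_insert_self u _, hwx ▸ huxadj⟩
      · have hws' : w ∈ s' := hmem_s'.2 ⟨hw, hwu, hwx⟩
        have htCP : Cpt G s' w ∈ CP := cmp_mem_comps hws'
        have hwm : w ∉ minDom G (Cpt G s' w) := by
          intro h
          exact hwD (mem_insert.2 (Or.inr (Finset.mem_biUnion.2 ⟨_, htCP, h⟩)))
        obtain ⟨d, hd, hadj⟩ := (minDom_dom G (Cpt G s' w)).2 w (self_mem_cmp hws') hwm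
        exact ⟨d, mem_insert.2 (Or.inr (Finset.mem_biUnion.2 ⟨_, htCP, hd⟩)), hadj⟩
    calc gam G s ≤ D.card := gam_le hDdom
      _ ≤ (CP.biUnion (fun t => minDom G t)).card + 1 := card_insert_le _ _
      _ ≤ (∑ t ∈ CP, (minDom G t).card) + 1 := by
          exact Nat.add_le_add_right (Finset.card_biUnion_le) 1
      _ = 1 + ∑ t ∈ CP, gam G t := by
          rw [Nat.add_comm]
          congr 1
          exact Finset.sum_congr rfl (fun t _ => minDom_card G t)
  have hcomp_le : ∀ t ∈ CP, 2 * gam G t ≤ t.card := fun t ht => ore (hcompnbr t ht)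
  have hsumcard : ∑ t ∈ CP, t.card = s'.card := comps_card_sum
  have hcompcard : ∀ t ∈ CP, 2 * gam G t = t.card := by
    have hA : ∑ t ∈ CP, 2 * gam G t ≤ ∑ t ∈ CP, t.card := Finset.sum_le_sum hcomp_le
    have hB : 2 * ∑ t ∈ CP, gam G t = ∑ t ∈ CP, 2 * gam G t := Finset.mul_sum _ _ _
    have hEq : ∑ t ∈ CP, 2 * gam G t = ∑ t ∈ CP, t.card := by omega
    exact fun t ht => (Finset.sum_eq_sum_iff_of_le hcomp_le).1 hEq t ht
  have hclass : ∀ t ∈ CP, C4S G t ∨ CorS G t := by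
    intro t ht
    have hm1 : t.card ≤ s'.card := card_le_card (mem_comps_subset ht)
    have hm2 : (edgesIn G t).card ≤ (edgesIn G s).card :=
      card_le_card (edgesIn_mono_set (fun w hw => hs'sub (mem_comps_subset ht hw)))
    exact ih G t (by omega) (mem_comps_connIn ht) (hcompcard t ht) (ht2 t ht)
  -- no component is a C4
  have hnoC4 : ∀ t ∈ CP, ¬ C4S G t := by
    intro t ht hC4
    obtain ⟨z, hz, hzadj⟩ := hucomp t ht
    obtain ⟨w, hw, hwopp⟩ := C4S_opp hC4 hz
    set D := insert u (insert w ((CP.erase t).biUnion (fun t' => minDom G t'))) with hD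
    have hDsub : D ⊆ s := by
      intro y hy
      rcases mem_insert.1 hy with rfl | hy
      · exact hu
      rcases mem_insert.1 hy with rfl | hy
      · exact hs'sub (mem_comps_subset ht hw)
      · obtain ⟨t', ht', hyt⟩ := Finset.mem_biUnion.1 hy
        exact hs'sub (mem_comps_subset (mem_of_mem_erase ht') ((minDom_dom G t').1 hyt))
    have hDdom : Dom G s D := by
      refine ⟨hDsub, ?_⟩
      intro y hy hyD
      have hyu : y ≠ u := fun h => hyD (h ▸ mem_insert_self u _)
      by_cases hyx : y = x
      · exact ⟨u, mem_insert_self u _, hyx ▸ huxadj⟩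
      have hys' : y ∈ s' := hmem_s'.2 ⟨hy, hyu, hyx⟩
      by_cases hyt : y ∈ t
      · rcases hwopp y hyt with rfl | rfl | hadj
        · exact ⟨u, mem_insert_self u _, hzadj⟩
        · exact absurd (mem_insert.2 (Or.inr (mem_insert_self y _))) hyD
        · exact ⟨w, mem_insert.2 (Or.inr (mem_insert_self w _)), hadj⟩
      · have htCP : Cpt G s' y ∈ CP := cmp_mem_comps hys'
        have htne : Cpt G s' y ≠ t := fun h => hyt (h ▸ self_mem_cmp hys')
        have hyerase : Cpt G s' y ∈ CP.erase t := mem_erase.2 ⟨htne, htCP⟩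
        have hym : y ∉ minDom G (Cpt G s' y) := by
          intro h
          exact hyD (mem_insert.2 (Or.inr (mem_insert.2 (Or.inr
            (Finset.mem_biUnion.2 ⟨_, hyerase, h⟩)))))
        obtain ⟨d, hd, hadj⟩ := (minDom_dom G (Cpt G s' y)).2 y (self_mem_cmp hys') hym
        exact ⟨d, mem_insert.2 (Or.inr (mem_insert.2 (Or.inr
          (Finset.mem_biUnion.2 ⟨_, hyerase, hd⟩)))), hadj⟩
    have hcard : D.card ≤ 2 + ∑ t' ∈ CP.erase t, gam G t' := by
      calc D.card ≤ (insert w ((CP.erase t).biUnion (fun t' => minDom G t'))).card + 1 :=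
            card_insert_le _ _
        _ ≤ ((CP.erase t).biUnion (fun t' => minDom G t')).card + 1 + 1 :=
            Nat.add_le_add_right (card_insert_le _ _) 1
        _ ≤ (∑ t' ∈ CP.erase t, (minDom G t').card) + 1 + 1 :=
            Nat.add_le_add_right (Nat.add_le_add_right Finset.card_biUnion_le 1) 1
        _ = 2 + ∑ t' ∈ CP.erase t, gam G t' := by
            have hss : ∑ t' ∈ CP.erase t, (minDom G t').card = ∑ t' ∈ CP.erase t, gam G t' :=
              Finset.sum_congr rfl (fun t' _ => minDom_card G t')
            omega
    have hsum_erase : (∑ t' ∈ CP.erase t, t'.card) + t.card = ∑ t' ∈ CP, t'.card :=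
      Finset.sum_erase_add _ _ ht
    have hsum_gam : ∑ t' ∈ CP.erase t, 2 * gam G t' = ∑ t' ∈ CP.erase t, t'.card :=
      Finset.sum_congr rfl (fun t' ht' => hcompcard t' (mem_of_mem_erase ht'))
    have hmul : 2 * ∑ t' ∈ CP.erase t, gam G t' = ∑ t' ∈ CP.erase t, 2 * gam G t' :=
      Finset.mul_sum _ _ _
    have htcard : t.card = 4 := C4S_card hC4
    have hgle : gam G s ≤ D.card := gam_le hDdom
    have hfix : (CP.erase t).sum (gam G) = ∑ t' ∈ CP.erase t, gam G t' := rfl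
    omega
  have hCor : ∀ t ∈ CP, CorS G t := fun t ht => (hclass t ht).resolve_left (hnoC4 t ht)
  -- choose corona structures on the components
  have hchoice : ∀ t : Finset V, ∃ (S : Finset V) (f : V → V), t ∈ CP →
      (S ⊆ t ∧ ConnIn G S ∧
        (∀ v ∈ S, f v ∈ t ∧ f v ∉ S ∧ G.Adj v (f v) ∧ ∀ w ∈ t, G.Adj w (f v) → w = v) ∧
        (∀ v ∈ S, ∀ w ∈ S, f v = f w → v = w) ∧
        (∀ w ∈ t, w ∉ S → ∃ v ∈ S, f v = w)) := by
    intro t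
    by_cases ht : t ∈ CP
    · obtain ⟨S, f, hp⟩ := hCor t ht
      exact ⟨S, f, fun _ => hp⟩
    · exact ⟨∅, id, fun h => absurd h ht⟩
  choose Sc fc hSc using hchoice
  have hSccard : ∀ t ∈ CP, 2 * (Sc t).card = t.card := by
    intro t ht
    obtain ⟨h1, h2', h3, h4, h5⟩ := hSc t ht
    exact (CorS_card h1 h3 h4 h5).2
  -- the generic cardinality contradiction
  have contra_glue : ∀ (p : V) (t0 : Finset V), t0 ∈ CP → p ∈ Sc t0 →
      Dom G s (insert u ((CP.biUnion Sc).erase p)) → False := by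
    intro p t0 ht0 hp hdom
    have hdisj : ∀ t1 ∈ CP, ∀ t2 ∈ CP, t1 ≠ t2 → Disjoint (Sc t1) (Sc t2) := by
      intro t1 h1 t2 h2 h12
      exact Finset.disjoint_of_subset_left (hSc t1 h1).1
        (Finset.disjoint_of_subset_right (hSc t2 h2).1 (comps_disj t1 h1 t2 h2 h12))
    have hcardX : (CP.biUnion Sc).card = ∑ t ∈ CP, (Sc t).card :=
      Finset.card_biUnion hdisj
    have hpX : p ∈ CP.biUnion Sc := Finset.mem_biUnion.2 ⟨t0, ht0, hp⟩
    have hXpos : 1 ≤ (CP.biUnion Sc).card := card_pos.2 ⟨p, hpX⟩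
    have hc1 : (insert u ((CP.biUnion Sc).erase p)).card ≤ (CP.biUnion Sc).card := by
      calc (insert u ((CP.biUnion Sc).erase p)).card ≤ ((CP.biUnion Sc).erase p).card + 1 :=
            card_insert_le _ _
        _ = (CP.biUnion Sc).card - 1 + 1 := by rw [card_erase_of_mem hpX]
        _ ≤ (CP.biUnion Sc).card := by omega
    have hsum2 : ∑ t ∈ CP, 2 * (Sc t).card = ∑ t ∈ CP, t.card :=
      Finset.sum_congr rfl hSccard
    have hmul : 2 * ∑ t ∈ CP, (Sc t).card = ∑ t ∈ CP, 2 * (Sc t).card :=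
      Finset.mul_sum _ _ _
    have hgle : gam G s ≤ (insert u ((CP.biUnion Sc).erase p)).card := gam_le hdom
    omega
  -- membership in D for the glue sets
  have hmemD : ∀ (p : V) (q : V) (t' : Finset V), t' ∈ CP → q ∈ Sc t' → q ≠ p →
      q ∈ insert u ((CP.biUnion Sc).erase p) := by
    intro p q t' ht' hq hqp
    exact mem_insert.2 (Or.inr (mem_erase.2 ⟨hqp, Finset.mem_biUnion.2 ⟨t', ht', hq⟩⟩))
  -- (A) : u cannot be adjacent to a leaf of a big component
  have hAcontra : ∀ t ∈ CP, ∀ l ∈ t, l ∉ Sc t → G.Adj u l → 2 ≤ (Sc t).card → False := by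
    intro t ht l hl hlS hul hcard2
    obtain ⟨h1, h2', h3, h4, h5⟩ := hSc t ht
    obtain ⟨p0, hp0, hfp0⟩ := h5 l hl hlS
    obtain ⟨q, hq, hqadj⟩ := connIn_no_isolated h2' hcard2 p0 hp0
    refine contra_glue p0 t ht hp0 ⟨?_, ?_⟩
    · intro w hw
      rcases mem_insert.1 hw with rfl | hw
      · exact hu
      · exact hs'sub (mem_comps_subset (Finset.mem_biUnion.1 (mem_of_mem_erase hw)).choose_spec.1
          ((hSc _ (Finset.mem_biUnion.1 (mem_of_mem_erase hw)).choose_spec.1).1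
            (Finset.mem_biUnion.1 (mem_of_mem_erase hw)).choose_spec.2))
    · intro w hw hwD
      have hwu : w ≠ u := fun h => hwD (by rw [h]; exact mem_insert_self u _)
      by_cases hwx : w = x
      · exact ⟨u, mem_insert_self u _, hwx ▸ huxadj⟩
      have hws' : w ∈ s' := hmem_s'.2 ⟨hw, hwu, hwx⟩
      set t' := Cpt G s' w with ht'def
      have ht' : t' ∈ CP := cmp_mem_comps hws'
      have hwt' : w ∈ t' := self_mem_cmp hws'
      by_cases hwS : w ∈ Sc t'
      · -- w must be p0
        have hwp0 : w = p0 := by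
          by_contra hne'
          exact hwD (hmemD p0 w t' ht' hwS hne')
        refine ⟨q, hmemD p0 q t ht hq hqadj.ne', ?_⟩
        rw [hwp0]
        exact hqadj.symm
      · obtain ⟨v, hv, hfv⟩ := (hSc t' ht').2.2.2.2 w hwt' hwS
        by_cases hvp0 : v = p0
        · -- then t' = t and w = l, dominated by u
          have hvt : v ∈ t := hvp0 ▸ h1 hp0
          have htt' : t' = t := by
            have h1' : v ∈ t' := (hSc t' ht').1 hv
            rw [← hCptEq t ht v hvt, ← hCptEq t' ht' v h1']
          have hwl : w = l := by
            rw [← hfv, hvp0]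
            rw [htt'] at *
            exact hfp0 ▸ rfl
          exact ⟨u, mem_insert_self u _, hwl ▸ hul⟩
        · refine ⟨v, hmemD p0 v t' ht' hv hvp0, ?_⟩
          exact hfv ▸ ((hSc t' ht').2.2.1 v hv).2.2.1
  -- (B) : u cannot be adjacent to both vertices of a K2 component
  have hBcontra : ∀ t ∈ CP, ∀ p ∈ Sc t, (Sc t).card = 1 → G.Adj u p → G.Adj u (fc t p) →
      False := by
    intro t ht p hp hcard1 hup hufp
    obtain ⟨h1, h2', h3, h4, h5⟩ := hSc t ht
    refine contra_glue p t ht hp ⟨?_, ?_⟩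
    · intro w hw
      rcases mem_insert.1 hw with rfl | hw
      · exact hu
      · obtain ⟨t', ht', hwt⟩ := Finset.mem_biUnion.1 (mem_of_mem_erase hw)
        exact hs'sub (mem_comps_subset ht' ((hSc t' ht').1 hwt))
    · intro w hw hwD
      have hwu : w ≠ u := fun h => hwD (by rw [h]; exact mem_insert_self u _)
      by_cases hwx : w = x
      · exact ⟨u, mem_insert_self u _, hwx ▸ huxadj⟩
      have hws' : w ∈ s' := hmem_s'.2 ⟨hw, hwu, hwx⟩
      set t' := Cpt G s' w with ht'def
      have ht' : t' ∈ CP := cmp_mem_comps hws'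
      have hwt' : w ∈ t' := self_mem_cmp hws'
      by_cases hwS : w ∈ Sc t'
      · by_cases hwp : w = p
        · exact ⟨u, mem_insert_self u _, hwp ▸ hup⟩
        · exact absurd (hmemD p w t' ht' hwS hwp) hwD
      · obtain ⟨v, hv, hfv⟩ := (hSc t' ht').2.2.2.2 w hwt' hwS
        by_cases hvp : v = p
        · -- w = fc t p, dominated by u
          have htt' : t' = t := by
            have hvt : v ∈ t := hvp ▸ h1 hp
            have h1' : v ∈ t' := (hSc t' ht').1 hv
            rw [← hCptEq t ht v hvt, ← hCptEq t' ht' v h1']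
          have : w = fc t p := by rw [← hfv, hvp, htt']
          exact ⟨u, mem_insert_self u _, this ▸ hufp⟩
        · refine ⟨v, hmemD p v t' ht' hv hvp, ?_⟩
          exact hfv ▸ ((hSc t' ht').2.2.1 v hv).2.2.1
  -- upgraded per-component corona structures
  have hfinal : ∀ t ∈ CP, ∃ (S' : Finset V) (f' : V → V),
      S' ⊆ t ∧ ConnIn G S' ∧
      (∀ v ∈ S', f' v ∈ t ∧ f' v ∉ S' ∧ G.Adj v (f' v) ∧ ∀ w ∈ s, G.Adj w (f' v) → w = v) ∧
      (∀ v ∈ S', ∀ w ∈ S', f' v = f' w → v = w) ∧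
      (∀ w ∈ t, w ∉ S' → ∃ v ∈ S', f' v = w) ∧
      (∃ w ∈ S', G.Adj u w) := by
    intro t ht
    obtain ⟨w0, hw0t, hw0adj⟩ := hucomp t ht
    obtain ⟨h1, h2', h3, h4, h5⟩ := hSc t ht
    have hupgrade : ∀ l ∈ t, ¬ G.Adj u l → ∀ w ∈ s, G.Adj w l → w ∈ t := by
      intro l hl hul w hw hadj
      by_contra hwt
      have hwu : w ≠ u := fun h => hul (h ▸ hadj)
      have hwx : w ≠ x := by
        intro h
        have : l = u := hux l (hs'sub (mem_comps_subset ht hl)) (h ▸ hadj).symm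
        exact hus' (this ▸ mem_comps_subset ht hl)
      exact mem_comps_no_cross ht l hl w (hmem_s'.2 ⟨hw, hwu, hwx⟩) hwt hadj.symm
    by_cases hcard2 : 2 ≤ (Sc t).card
    · have hnoleaf : ∀ l ∈ t, l ∉ Sc t → ¬ G.Adj u l :=
        fun l hl hlS hadj => hAcontra t ht l hl hlS hadj hcard2
      have hw0S : w0 ∈ Sc t := by
        by_contra hw0S
        exact hnoleaf w0 hw0t hw0S hw0adj
      refine ⟨Sc t, fc t, h1, h2', ?_, h4, h5, ⟨w0, hw0S, hw0adj⟩⟩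
      intro v hv
      obtain ⟨hf1, hf2, hf3, hf4⟩ := h3 v hv
      refine ⟨hf1, hf2, hf3, ?_⟩
      intro w hw hadj
      exact hf4 w (hupgrade (fc t v) hf1 (hnoleaf (fc t v) hf1 hf2) w hw hadj) hadj
    · -- singleton support, K2 component
      have hSne : (Sc t).Nonempty := h2'.1
      have hcard1 : (Sc t).card = 1 := by
        have := card_pos.2 hSne
        omega
      obtain ⟨p, hpeq⟩ := card_eq_one.1 hcard1
      have hp : p ∈ Sc t := hpeq ▸ mem_singleton_self p
      obtain ⟨hf1, hf2, hf3, hf4⟩ := h3 p hp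
      have htsub : ∀ w ∈ t, w = p ∨ w = fc t p := by
        intro w hw
        by_cases hwS : w ∈ Sc t
        · exact Or.inl (by rw [hpeq] at hwS; exact mem_singleton.1 hwS)
        · obtain ⟨v, hv, hfv⟩ := h5 w hw hwS
          have : v = p := by rw [hpeq] at hv; exact mem_singleton.1 hv
          exact Or.inr (by rw [← hfv, this])
      by_cases hup : G.Adj u p
      · have hufp : ¬ G.Adj u (fc t p) := fun h => hBcontra t ht p hp hcard1 hup h
        refine ⟨Sc t, fc t, h1, h2', ?_, h4, h5, ⟨p, hp, hup⟩⟩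
        intro v hv
        have hvp : v = p := by rw [hpeq] at hv; exact mem_singleton.1 hv
        subst hvp
        refine ⟨hf1, hf2, hf3, ?_⟩
        intro w hw hadj
        exact hf4 w (hupgrade (fc t v) hf1 hufp w hw hadj) hadj
      · -- flip the K2
        have hw0fp : w0 = fc t p := by
          rcases htsub w0 hw0t with rfl | h
          · exact absurd hw0adj hup
          · exact h
        have hpfp : p ≠ fc t p := fun h => hf2 (h ▸ hp)
        refine ⟨{fc t p}, fun _ => p, ?_, ?_, ?_, ?_, ?_, ?_⟩
        · intro w hw; rw [mem_singleton.1 hw]; exact hf1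
        · exact ⟨⟨fc t p, mem_singleton_self _⟩, fun a ha b hb => by
            rw [mem_singleton.1 ha, mem_singleton.1 hb]; exact reachIn_refl G _ _⟩
        · intro v hv
          rw [mem_singleton.1 hv]
          refine ⟨h1 hp, by simpa using hpfp, hf3.symm, ?_⟩
          intro w hw hadj
          have hwt : w ∈ t := hupgrade p (h1 hp) hup w hw hadj
          rcases htsub w hwt with rfl | h
          · exact absurd hadj (G.irrefl)
          · exact h
        · intro v hv w hw _
          rw [mem_singleton.1 hv, mem_singleton.1 hw]
        · intro w hw hwS
          refine ⟨fc t p, mem_singleton_self _, ?_⟩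
          rcases htsub w hw with rfl | h
          · rfl
          · exact absurd (h ▸ mem_singleton_self (fc t p)) (h ▸ hwS)
        · exact ⟨fc t p, mem_singleton_self _, hw0fp ▸ hw0adj⟩
  -- choose the final per-component structures
  have hchoice2 : ∀ t : Finset V, ∃ (S' : Finset V) (f' : V → V), t ∈ CP →
      (S' ⊆ t ∧ ConnIn G S' ∧
      (∀ v ∈ S', f' v ∈ t ∧ f' v ∉ S' ∧ G.Adj v (f' v) ∧ ∀ w ∈ s, G.Adj w (f' v) → w = v) ∧
      (∀ v ∈ S', ∀ w ∈ S', f' v = f' w → v = w) ∧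
      (∀ w ∈ t, w ∉ S' → ∃ v ∈ S', f' v = w) ∧
      (∃ w ∈ S', G.Adj u w)) := by
    intro t
    by_cases ht : t ∈ CP
    · obtain ⟨S', f', hp⟩ := hfinal t ht
      exact ⟨S', f', fun _ => hp⟩
    · exact ⟨∅, id, fun h => absurd h ht⟩
  choose Sd fd hSd using hchoice2
  -- final assembly
  set SS := insert u (CP.biUnion Sd) with hSS
  have hSdsubS : ∀ t ∈ CP, Sd t ⊆ SS := by
    intro t ht v hv
    exact mem_insert.2 (Or.inr (Finset.mem_biUnion.2 ⟨t, ht, hv⟩))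
  have hSdt : ∀ t ∈ CP, ∀ v ∈ Sd t, v ∈ t := fun t ht v hv => (hSd t ht).1 hv
  have hSds' : ∀ t ∈ CP, ∀ v ∈ Sd t, v ∈ s' := fun t ht v hv =>
    mem_comps_subset ht (hSdt t ht v hv)
  have hSSsub : SS ⊆ s := by
    intro w hw
    rcases mem_insert.1 hw with rfl | hw
    · exact hu
    · obtain ⟨t, ht, hwt⟩ := Finset.mem_biUnion.1 hw
      exact hs'sub (hSds' t ht w hwt)
  have hCptSd : ∀ t ∈ CP, ∀ v ∈ Sd t, Cpt G s' v = t := by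
    intro t ht v hv
    exact hCptEq t ht v (hSdt t ht v hv)
  set ff : V → V := fun v => if v = u then x else fd (Cpt G s' v) v with hff
  have hffu : ff u = x := by simp [hff]
  have hffv : ∀ t ∈ CP, ∀ v ∈ Sd t, ff v = fd t v := by
    intro t ht v hv
    have hvu : v ≠ u := fun h => hus' (h ▸ hSds' t ht v hv)
    simp only [hff, if_neg hvu, hCptSd t ht v hv]
  refine ⟨SS, ff, hSSsub, ?_, ?_, ?_, ?_⟩
  · -- connectivity of SS
    have hreachu : ∀ a ∈ SS, ReachIn G SS a u := by
      intro a ha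
      rcases mem_insert.1 ha with rfl | ha
      · exact reachIn_refl G _ a
      · obtain ⟨t, ht, hat⟩ := Finset.mem_biUnion.1 ha
        obtain ⟨wt, hwt, hwtadj⟩ := (hSd t ht).2.2.2.2.2
        have h1 : ReachIn G (Sd t) a wt := (hSd t ht).2.1.2 a hat wt hwt
        have h2'' : ReachIn G SS a wt := reachIn_mono (hSdsubS t ht) h1
        exact reachIn_trans h2'' (Relation.ReflTransGen.single
          ⟨hSdsubS t ht hwt, mem_insert_self u _, hwtadj.symm⟩)
    exact ⟨⟨u, mem_insert_self u _⟩, fun a ha b hb =>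
      reachIn_trans (hreachu a ha) (reachIn_symm (hreachu b hb))⟩
  · -- pendant structure
    intro v hv
    rcases mem_insert.1 hv with rfl | hv
    · rw [hffu]
      refine ⟨hx, ?_, huxadj, hux⟩
      intro hxSS
      rcases mem_insert.1 hxSS with h | h
      · exact hne h.symm
      · obtain ⟨t, ht, hxt⟩ := Finset.mem_biUnion.1 h
        exact hxs' (hSds' t ht x hxt)
    · obtain ⟨t, ht, hvt⟩ := Finset.mem_biUnion.1 hv
      rw [hffv t ht v hvt]
      obtain ⟨hf1, hf2, hf3, hf4⟩ := (hSd t ht).2.2.1 v hvt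
      have hfs' : fd t v ∈ s' := mem_comps_subset ht hf1
      refine ⟨hs'sub hfs', ?_, hf3, hf4⟩
      intro hfSS
      rcases mem_insert.1 hfSS with h | h
      · exact hus' (h ▸ hfs')
      · obtain ⟨t'', ht'', hft⟩ := Finset.mem_biUnion.1 h
        have : t'' = t := by
          rw [← hCptSd t'' ht'' _ hft, hCptEq t ht _ hf1]
        exact hf2 (this ▸ hft)
  · -- injectivity
    intro v hv w hw hvw
    rcases mem_insert.1 hv with rfl | hv <;> rcases mem_insert.1 hw with h | hw'
    · exact h.symm
    · obtain ⟨t, ht, hwt⟩ := Finset.mem_biUnion.1 hw'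
      rw [hffu, hffv t ht w hwt] at hvw
      have : fd t w ∈ s' := mem_comps_subset ht ((hSd t ht).2.2.1 w hwt).1
      exact absurd (hvw ▸ this) hxs'
    · obtain ⟨t, ht, hvt⟩ := Finset.mem_biUnion.1 hv
      subst h
      rw [hffu, hffv t ht v hvt] at hvw
      have : fd t v ∈ s' := mem_comps_subset ht ((hSd t ht).2.2.1 v hvt).1
      exact absurd (hvw ▸ this) hxs'
    · obtain ⟨t, ht, hvt⟩ := Finset.mem_biUnion.1 hv
      obtain ⟨t', ht', hwt⟩ := Finset.mem_biUnion.1 hw'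
      rw [hffv t ht v hvt, hffv t' ht' w hwt] at hvw
      have h1 : fd t v ∈ t := ((hSd t ht).2.2.1 v hvt).1
      have h2'' : fd t' w ∈ t' := ((hSd t' ht').2.2.1 w hwt).1
      have htt : t = t' := by
        rw [← hCptEq t ht _ h1, hvw, hCptEq t' ht' _ h2'']
      subst htt
      exact (hSd t ht).2.2.2.1 v hvt w hwt hvw
  · -- surjectivity onto leaves
    intro w hw hwSS
    by_cases hwx : w = x
    · exact ⟨u, mem_insert_self u _, hffu ▸ hwx.symm⟩
    · have hwu : w ≠ u := fun h => hwSS (h ▸ mem_insert_self u _)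
      have hws' : w ∈ s' := hmem_s'.2 ⟨hw, hwu, hwx⟩
      set t := Cpt G s' w with htdef
      have ht : t ∈ CP := cmp_mem_comps hws'
      have hwt : w ∈ t := self_mem_cmp hws'
      have hwS : w ∉ Sd t := fun h => hwSS (hSdsubS t ht h)
      obtain ⟨v, hv, hfv⟩ := (hSd t ht).2.2.2.2.1 w hwt hwS
      exact ⟨v, hSdsubS t ht hv, (hffv t ht v hv).trans hfv⟩

/-- Main lemma, case of minimum degree ≥ 2. -/
lemma caseB {N : ℕ} {G : SimpleGraph V} {s : Finset V}
    (ih : ∀ (G' : SimpleGraph V) (t : Finset V), t.card + (edgesIn G' t).card ≤ N →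
      ConnIn G' t → 2 * gam G' t = t.card → 2 ≤ t.card → C4S G' t ∨ CorS G' t)
    (hN : s.card + (edgesIn G s).card ≤ N + 1)
    (hconn : ConnIn G s) (hgam : 2 * gam G s = s.card) (h2 : 2 ≤ s.card)
    (hnl : ∀ y ∈ s, ∀ z ∈ s, G.Adj z y → ∃ w ∈ s, G.Adj w y ∧ w ≠ z) :
    C4S G s ∨ CorS G s := by
  classical
  have hiso := connIn_no_isolated hconn h2
  have hdeg2 : ∀ v ∈ s, ∃ a ∈ s, ∃ b ∈ s, G.Adj v a ∧ G.Adj v b ∧ a ≠ b := by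
    intro v hv
    obtain ⟨a, ha, hadj⟩ := hiso v hv
    obtain ⟨w, hw, hwadj, hwa⟩ := hnl v hv a ha hadj.symm
    exact ⟨a, ha, w, hw, hadj, hwadj.symm, fun h => hwa h.symm⟩
  obtain ⟨a0, ha0s⟩ := hconn.1
  obtain ⟨b0, hb0s, hab0adj⟩ := hiso a0 ha0s
  have hne0 : a0 ≠ b0 := hab0adj.ne
  set G' := G.deleteEdges {s(a0, b0)} with hG'def
  have hG'le : ∀ p q, G'.Adj p q → G.Adj p q := fun p q h => h.1
  have hG'adj : ∀ p q, G'.Adj p q ↔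
      G.Adj p q ∧ ¬(p = a0 ∧ q = b0) ∧ ¬(p = b0 ∧ q = a0) := by
    intro p q
    rw [hG'def, SimpleGraph.deleteEdges_adj]
    simp only [Set.mem_singleton_iff, Sym2.eq_iff]
    tauto
  have hG'nab : ¬ G'.Adj a0 b0 := by
    rw [hG'adj]
    tauto
  have hG'nbr : ∀ v ∈ s, ∃ w ∈ s, G'.Adj v w := by
    intro v hv
    obtain ⟨a, ha, b, hb, hva, hvb, hab⟩ := hdeg2 v hv
    by_cases h1 : G'.Adj v a
    · exact ⟨a, ha, h1⟩
    by_cases h2' : G'.Adj v b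
    · exact ⟨b, hb, h2'⟩
    exfalso
    have e1 : (v = a0 ∧ a = b0) ∨ (v = b0 ∧ a = a0) := by
      have := (hG'adj v a).2
      tauto
    have e2 : (v = a0 ∧ b = b0) ∨ (v = b0 ∧ b = a0) := by
      have := (hG'adj v b).2
      tauto
    rcases e1 with ⟨rfl, rfl⟩ | ⟨rfl, rfl⟩ <;> rcases e2 with ⟨h3, h4⟩ | ⟨h3, h4⟩ <;>
      simp_all
  have hgamle' : gam G s ≤ gam G' s := by
    obtain ⟨D, hD, hc⟩ := exists_minDom G' s
    have : Dom G s D := ⟨hD.1, fun v hv hv' => by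
      obtain ⟨d, hd, hadj⟩ := hD.2 v hv hv'
      exact ⟨d, hd, hG'le _ _ hadj⟩⟩
    calc gam G s ≤ D.card := gam_le this
      _ = gam G' s := hc
  by_cases hreach : ReachIn G' s a0 b0
  · -- deleted edge lay on a cycle
    have htrans : ∀ p q, ReachIn G s p q → ReachIn G' s p q := by
      intro p q h
      induction h with
      | refl => exact reachIn_refl _ _ _
      | @tail b' c h1 hstep ihh =>
        refine reachIn_trans ihh ?_
        by_cases hG'bc : G'.Adj b' c
        · exact Relation.ReflTransGen.single ⟨hstep.1, hstep.2.1, hG'bc⟩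
        · have : (b' = a0 ∧ c = b0) ∨ (b' = b0 ∧ c = a0) := by
            have := (hG'adj b' c).2
            have := hstep.2.2
            tauto
          rcases this with ⟨rfl, rfl⟩ | ⟨rfl, rfl⟩
          · exact hreach
          · exact reachIn_symm hreach
    have hconn' : ConnIn G' s := ⟨hconn.1, fun a ha b hb => htrans _ _ (hconn.2 a ha b hb)⟩
    have hore' := ore hG'nbr
    have hgam'' : 2 * gam G' s = s.card := by omega
    have hmeas : (edgesIn G' s).card < (edgesIn G s).card := by
      apply card_lt_card
      refine ⟨edgesIn_mono_graph hG'le, fun hsub => ?_⟩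
      have h1 : (a0, b0) ∈ edgesIn G s := mem_edgesIn.2 ⟨⟨ha0s, hb0s⟩, hab0adj⟩
      have h2' : (a0, b0) ∉ edgesIn G' s := fun h => hG'nab (mem_edgesIn.1 h).2
      exact h2' (hsub h1)
    rcases ih G' s (by omega) hconn' hgam'' h2 with hC4 | hCor
    · -- G' is an induced C4, the deleted edge is a diagonal: contradiction
      exfalso
      have hdom1 : ∀ z ∈ s, (∀ y ∈ s, y ≠ z → G.Adj z y) → False := by
        intro z hz hdom
        have hD : Dom G s {z} := ⟨singleton_subset_iff.2 hz, fun v hv hv' =>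
          ⟨z, mem_singleton_self z, hdom v hv (fun h => hv' (h ▸ mem_singleton_self z))⟩⟩
        have h1 := gam_le hD
        have h4 := C4S_card hC4
        simp only [card_singleton] at h1
        omega
      obtain ⟨a, b, c, d, hseq, hac, hbd, hab, hbc, hcd, hda, hnac, hnbd⟩ := hC4
      have hmema0 : a0 ∈ ({a, b, c, d} : Finset V) := hseq ▸ ha0s
      have hmemb0 : b0 ∈ ({a, b, c, d} : Finset V) := hseq ▸ hb0s
      have hmem : ∀ y ∈ s, y = a ∨ y = b ∨ y = c ∨ y = d := by
        intro y hy
        have := hseq ▸ hy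
        simpa using this
      simp only [mem_insert, mem_singleton] at hmema0 hmemb0
      -- helper to finish a case: z dominates everything
      rcases hmema0 with rfl | rfl | rfl | rfl
      · -- a0 = a ⇒ b0 = c
        rcases hmemb0 with h | h | h | h
        · exact hne0 h.symm
        · exact hG'nab (h ▸ hab)
        · subst h
          refine hdom1 a0 ha0s ?_
          intro y hy hyne
          rcases hmem y hy with rfl | rfl | rfl | rfl
          · exact absurd rfl hyne
          · exact hG'le _ _ hab
          · exact hab0adj
          · exact hG'le _ _ hda.symm
        · exact hG'nab (h ▸ hda.symm)
      · rcases hmemb0 with h | h | h | h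
        · exact hG'nab (h ▸ hab.symm)
        · exact hne0 h.symm
        · exact hG'nab (h ▸ hbc)
        · subst h
          refine hdom1 a0 ha0s ?_
          intro y hy hyne
          rcases hmem y hy with rfl | rfl | rfl | rfl
          · exact hG'le _ _ hab.symm
          · exact absurd rfl hyne
          · exact hG'le _ _ hbc
          · exact hab0adj
      · rcases hmemb0 with h | h | h | h
        · subst h
          refine hdom1 a0 ha0s ?_
          intro y hy hyne
          rcases hmem y hy with rfl | rfl | rfl | rfl
          · exact hab0adj
          · exact hG'le _ _ hbc.symm
          · exact absurd rfl hyne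
          · exact hG'le _ _ hcd
        · exact hG'nab (h ▸ hbc.symm)
        · exact hne0 h.symm
        · exact hG'nab (h ▸ hcd)
      · rcases hmemb0 with h | h | h | h
        · exact hG'nab (h ▸ hda)
        · subst h
          refine hdom1 a0 ha0s ?_
          intro y hy hyne
          rcases hmem y hy with rfl | rfl | rfl | rfl
          · exact hG'le _ _ hda
          · exact hab0adj
          · exact hG'le _ _ hcd.symm
          · exact absurd rfl hyne
        · exact hG'nab (h ▸ hcd.symm)
        · exact hne0 h.symm
    · -- G' is a corona : G is C4 (the path P4 plus the edge back)
      obtain ⟨S, f, hSsub, hSconn, hleaf, hinj, hsurj⟩ := hCor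
      have hL : ∀ l ∈ s, l ∉ S → l = a0 ∨ l = b0 := by
        intro l hl hlS
        obtain ⟨v, hv, hfv⟩ := hsurj l hl hlS
        by_contra hcon
        push_neg at hcon
        have hGadj : G.Adj v l := hG'le _ _ (hfv ▸ (hleaf v hv).2.2.1)
        obtain ⟨w, hw, hwadj, hwv⟩ := hnl l hl v (hSsub hv) hGadj
        have hG'wl : G'.Adj w l := (hG'adj w l).2 ⟨hwadj,
          fun h => hcon.2 h.2, fun h => hcon.1 h.2⟩
        exact hwv ((hleaf v hv).2.2.2 w hw (hfv ▸ hG'wl))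
      have hcards := CorS_card hSsub hleaf hinj hsurj
      have hdiffsub : s \ S ⊆ {a0, b0} := by
        intro l hl
        rcases mem_sdiff.1 hl with ⟨hl1, hl2⟩
        rcases hL l hl1 hl2 with rfl | rfl
        · exact mem_insert_self _ _
        · exact mem_insert.2 (Or.inr (mem_singleton_self _))
      have hcard3 : 3 ≤ s.card := by
        obtain ⟨a, ha, b, hb, hva, hvb, hab⟩ := hdeg2 a0 ha0s
        have hsub3 : ({a0, a, b} : Finset V) ⊆ s := by
          intro w hw
          rcases mem_insert.1 hw with rfl | hw
          · exact ha0s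
          rcases mem_insert.1 hw with rfl | hw
          · exact ha
          · exact (mem_singleton.1 hw) ▸ hb
        have h3 : ({a0, a, b} : Finset V).card = 3 := by
          rw [card_insert_of_notMem, card_pair hab]
          simp only [mem_insert, mem_singleton]
          push_neg
          exact ⟨hva.ne, hvb.ne⟩
        calc 3 = ({a0, a, b} : Finset V).card := h3.symm
          _ ≤ s.card := card_le_card hsub3
      have hdcard : (s \ S).card ≤ 2 := by
        calc (s \ S).card ≤ ({a0, b0} : Finset V).card := card_le_card hdiffsub
          _ ≤ 2 := card_insert_le _ _ |>.trans (by simp)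
      have hscard4 : s.card = 4 := by omega
      have hdiff : s \ S = {a0, b0} := by
        apply Finset.eq_of_subset_of_card_le hdiffsub
        rw [card_pair hne0]
        omega
      have ha0S : a0 ∉ S := fun h => by
        have : a0 ∉ s \ S := fun h' => (mem_sdiff.1 h').2 h
        rw [hdiff] at this
        exact this (mem_insert_self _ _)
      have hb0S : b0 ∉ S := fun h => by
        have : b0 ∉ s \ S := fun h' => (mem_sdiff.1 h').2 h
        rw [hdiff] at this
        exact this (mem_insert.2 (Or.inr (mem_singleton_self _)))
      obtain ⟨p, hp, hfp⟩ := hsurj a0 ha0s ha0S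
      obtain ⟨q, hq, hfq⟩ := hsurj b0 hb0s hb0S
      have hpq : p ≠ q := fun h => hne0 (hfp ▸ hfq ▸ (h ▸ rfl))
      have hSeq : S = {p, q} := by
        have hsub : ({p, q} : Finset V) ⊆ S := by
          intro w hw
          rcases mem_insert.1 hw with rfl | hw
          · exact hp
          · exact (mem_singleton.1 hw) ▸ hq
        exact (Finset.eq_of_subset_of_card_le hsub (by rw [card_pair hpq]; omega)).symm
      have hpqadj : G'.Adj p q := by
        obtain ⟨c, hc, hadj, _⟩ := reachIn_head (hSconn.2 p hp q hq) hpq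
        have : c = p ∨ c = q := by
          have := hSeq ▸ hc
          simpa using this
        rcases this with rfl | rfl
        · exact absurd hadj (G'.irrefl)
        · exact hadj
      have hGpa0 : G.Adj p a0 := hG'le _ _ (hfp ▸ (hleaf p hp).2.2.1)
      have hGqb0 : G.Adj q b0 := hG'le _ _ (hfq ▸ (hleaf q hq).2.2.1)
      have hGpq : G.Adj p q := hG'le _ _ hpqadj
      have hqb0 : q ≠ b0 := fun h => hb0S (h ▸ hq)
      have hpa0 : p ≠ a0 := fun h => ha0S (h ▸ hp)
      have hna0q : ¬ G.Adj a0 q := by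
        intro h
        have hG' : G'.Adj q a0 := (hG'adj q a0).2 ⟨h.symm,
          fun hh => hne0 hh.2, fun hh => hqb0 hh.1⟩
        exact hpq ((hleaf p hp).2.2.2 q (hSsub hq) (hfp ▸ hG')).symm
      have hnpb0 : ¬ G.Adj p b0 := by
        intro h
        have hG' : G'.Adj p b0 := (hG'adj p b0).2 ⟨h,
          fun hh => hpa0 hh.1, fun hh => hne0 hh.2.symm⟩
        exact hpq ((hleaf q hq).2.2.2 p (hSsub hp) (hfq ▸ hG'))
      left
      have hset : s = ({a0, p, q, b0} : Finset V) := by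
        apply Finset.Subset.antisymm
        · intro w hw
          by_cases hwS : w ∈ S
          · have : w = p ∨ w = q := by
              rw [hSeq] at hwS
              simpa using hwS
            simp only [mem_insert, mem_singleton]
            tauto
          · have := hL w hw hwS
            simp only [mem_insert, mem_singleton]
            tauto
        · intro w hw
          simp only [mem_insert, mem_singleton] at hw
          rcases hw with rfl | rfl | rfl | rfl
          exacts [ha0s, hSsub hp, hSsub hq, hb0s]
      exact ⟨a0, p, q, b0, hset, fun h => ha0S (h ▸ hq), fun h => hb0S (h ▸ hp),
        hGpa0.symm, hGpq, hGqb0, hab0adj.symm, hna0q, hnpb0⟩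
  · -- bridge case : always a contradiction
    exfalso
    set t := Cpt G' s a0 with htdef
    set t2 := s \ t with ht2def
    have ha0t : a0 ∈ t := self_mem_cmp ha0s
    have hb0t : b0 ∉ t := fun h => hreach (mem_cmp.1 h).2
    have hb0t2 : b0 ∈ t2 := mem_sdiff.2 ⟨hb0s, hb0t⟩
    have ha0t2 : a0 ∉ t2 := fun h => (mem_sdiff.1 h).2 ha0t
    have htsub : t ⊆ s := cmp_subset
    have ht2sub : t2 ⊆ s := sdiff_subset
    have hG'cross : ∀ p ∈ t, ∀ q ∈ s, q ∉ t → ¬ G'.Adj p q :=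
      fun p hp q hq hqt hadj => hqt (adj_mem_cmp hp hq hadj)
    have hcross : ∀ p ∈ t, ∀ q ∈ s, q ∉ t → G.Adj p q → p = a0 ∧ q = b0 := by
      intro p hp q hq hqt hadj
      by_cases hG' : G'.Adj p q
      · exact absurd hG' (hG'cross p hp q hq hqt)
      · have : (p = a0 ∧ q = b0) ∨ (p = b0 ∧ q = a0) := by
          have := (hG'adj p q).2
          tauto
        rcases this with h | ⟨rfl, rfl⟩
        · exact h
        · exact absurd hp hb0t
    have ht2b0 : ∀ c ∈ t2, ReachIn G' s c b0 := by
      intro c hc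
      rcases mem_sdiff.1 hc with ⟨hcs, hct⟩
      by_contra hcb0
      set t3 := Cpt G' s c with ht3def
      have hct3 : c ∈ t3 := self_mem_cmp hcs
      have ha0t3 : a0 ∉ t3 := by
        intro h
        have he : Cpt G' s a0 = t3 := cmp_eq_of_mem h
        rw [← htdef] at he
        exact hct (he.symm ▸ hct3)
      have hb0t3 : b0 ∉ t3 := fun h => hcb0 (mem_cmp.1 h).2
      have hcross3 : ∀ p ∈ t3, ∀ q ∈ s, q ∉ t3 → ¬ G.Adj p q := by
        intro p hp q hq hqt3 hadj
        by_cases hG' : G'.Adj p q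
        · exact hqt3 (adj_mem_cmp hp hq hG')
        · have : (p = a0 ∧ q = b0) ∨ (p = b0 ∧ q = a0) := by
            have := (hG'adj p q).2
            tauto
          rcases this with ⟨rfl, _⟩ | ⟨rfl, _⟩
          · exact ha0t3 hp
          · -- p = b0 ∈ t3 : but then b0 ∈ t3, contradiction
            exact hb0t3 hp
      exact hb0t3 (reachIn_confine hcross3 hct3 (hconn.2 c hcs b0 hb0s)).1
    have hG'cross2 : ∀ p ∈ t2, ∀ q ∈ s, q ∉ t2 → ¬ G'.Adj p q := by
      intro p hp q hq hq2 hadj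
      have hqt : q ∈ t := by
        by_contra h
        exact hq2 (mem_sdiff.2 ⟨hq, h⟩)
      exact (mem_sdiff.1 hp).2 (adj_mem_cmp hqt (ht2sub hp) hadj.symm)
    have hconn_t : ConnIn G t := by
      refine ⟨⟨a0, ha0t⟩, fun a ha b hb => ?_⟩
      exact reachIn_mono_graph hG'le ((connIn_cmp ha0s).2 a ha b hb)
    have hconn_t2 : ConnIn G t2 := by
      refine ⟨⟨b0, hb0t2⟩, fun c hc d hd => ?_⟩
      have h1 := (reachIn_confine hG'cross2 hc (ht2b0 c hc)).2
      have h2' := (reachIn_confine hG'cross2 hd (ht2b0 d hd)).2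
      exact reachIn_mono_graph hG'le (reachIn_trans h1 (reachIn_symm h2'))
    have hnbr_t : ∀ v ∈ t, ∃ w ∈ t, G.Adj v w := by
      intro v hv
      obtain ⟨a, ha, b, hb, hva, hvb, hab⟩ := hdeg2 v (htsub hv)
      by_cases hat : a ∈ t
      · exact ⟨a, hat, hva⟩
      by_cases hbt : b ∈ t
      · exact ⟨b, hbt, hvb⟩
      exfalso
      obtain ⟨_, rfl⟩ := hcross v hv a ha hat hva
      obtain ⟨_, h⟩ := hcross v hv b hb hbt hvb
      exact hab h.symm
    have hnbr_t2 : ∀ v ∈ t2, ∃ w ∈ t2, G.Adj v w := by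
      intro v hv
      obtain ⟨a, ha, b, hb, hva, hvb, hab⟩ := hdeg2 v (ht2sub hv)
      by_cases hat : a ∈ t2
      · exact ⟨a, hat, hva⟩
      by_cases hbt : b ∈ t2
      · exact ⟨b, hbt, hvb⟩
      exfalso
      have hat' : a ∈ t := by
        by_contra h
        exact hat (mem_sdiff.2 ⟨ha, h⟩)
      have hbt' : b ∈ t := by
        by_contra h
        exact hbt (mem_sdiff.2 ⟨hb, h⟩)
      obtain ⟨rfl, h1⟩ := hcross a hat' v (ht2sub hv) (mem_sdiff.1 hv).2 hva.symm
      obtain ⟨h2', h3⟩ := hcross b hbt' v (ht2sub hv) (mem_sdiff.1 hv).2 hvb.symm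
      exact hab h2'.symm
    have hgamle2 : gam G s ≤ gam G t + gam G t2 := by
      have hdom : Dom G s (minDom G t ∪ minDom G t2) := by
        constructor
        · intro w hw
          rcases mem_union.1 hw with hw | hw
          · exact htsub ((minDom_dom G t).1 hw)
          · exact ht2sub ((minDom_dom G t2).1 hw)
        · intro v hv hv'
          by_cases hvt : v ∈ t
          · have : v ∉ minDom G t := fun h => hv' (mem_union.2 (Or.inl h))
            obtain ⟨d, hd, hadj⟩ := (minDom_dom G t).2 v hvt this
            exact ⟨d, mem_union.2 (Or.inl hd), hadj⟩
          · have hvt2 : v ∈ t2 := mem_sdiff.2 ⟨hv, hvt⟩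
            have : v ∉ minDom G t2 := fun h => hv' (mem_union.2 (Or.inr h))
            obtain ⟨d, hd, hadj⟩ := (minDom_dom G t2).2 v hvt2 this
            exact ⟨d, mem_union.2 (Or.inr hd), hadj⟩
      calc gam G s ≤ (minDom G t ∪ minDom G t2).card := gam_le hdom
        _ ≤ (minDom G t).card + (minDom G t2).card := card_union_le _ _
        _ = gam G t + gam G t2 := by rw [minDom_card, minDom_card]
    have hore_t := ore hnbr_t
    have hore_t2 := ore hnbr_t2
    have hcardsum : t.card + t2.card = s.card := by
      rw [ht2def, card_sdiff_of_subset htsub]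
      have := card_le_card htsub
      omega
    have hgamt : 2 * gam G t = t.card := by omega
    have hgamt2 : 2 * gam G t2 = t2.card := by omega
    have hcard_t : 2 ≤ t.card := by
      obtain ⟨w, hw, hadj⟩ := hnbr_t a0 ha0t
      exact Finset.one_lt_card.2 ⟨a0, ha0t, w, hw, hadj.ne⟩
    have hcard_t2 : 2 ≤ t2.card := by
      obtain ⟨w, hw, hadj⟩ := hnbr_t2 b0 hb0t2
      exact Finset.one_lt_card.2 ⟨b0, hb0t2, w, hw, hadj.ne⟩
    have htlt : t.card < s.card := card_lt_card ⟨htsub, fun h => hb0t (h hb0s)⟩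
    have ht2lt : t2.card < s.card := card_lt_card ⟨ht2sub, fun h => ha0t2 (h ha0s)⟩
    have hme_t : (edgesIn G t).card ≤ (edgesIn G s).card := card_le_card (edgesIn_mono_set htsub)
    have hme_t2 : (edgesIn G t2).card ≤ (edgesIn G s).card := card_le_card (edgesIn_mono_set ht2sub)
    -- kill corona structures on the two sides
    have killCor : ∀ (t' : Finset V) (z : V), t' ⊆ s → z ∈ t' →
        (∀ p ∈ t', ∀ q ∈ s, q ∉ t' → G.Adj p q → p = z) → CorS G t' → False := by
      intro t' z ht's hz hcr hC
      obtain ⟨S, f, hSsub, hSconn, hleaf, hinj, hsurj⟩ := hC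
      have hleafz : ∀ l ∈ t', l ∉ S → l = z := by
        intro l hl hlS
        obtain ⟨v, hv, hfv⟩ := hsurj l hl hlS
        obtain ⟨w, hw, hwadj, hwv⟩ := hnl l (ht's hl) v (ht's (hSsub hv))
          (hfv ▸ (hleaf v hv).2.2.1)
        by_cases hwt : w ∈ t'
        · exact absurd ((hleaf v hv).2.2.2 w hwt (hfv ▸ hwadj)) hwv
        · exact hcr l hl w hw hwt hwadj.symm
      have hcards := CorS_card hSsub hleaf hinj hsurj
      have hsub' : t' \ S ⊆ {z} := fun l hl =>
        mem_singleton.2 (hleafz l (mem_sdiff.1 hl).1 (mem_sdiff.1 hl).2)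
      have hS1 : S.card ≤ 1 := by
        have := card_le_card hsub'
        simp only [card_singleton] at this
        omega
      have hSpos : 1 ≤ S.card := card_pos.2 hSconn.1
      obtain ⟨v0, hv0eq⟩ := card_eq_one.1 (le_antisymm hS1 hSpos)
      have hv0 : v0 ∈ S := hv0eq ▸ mem_singleton_self v0
      have hzv0 : z ≠ v0 := by
        intro h
        -- then z ∈ S, but t' \ S is nonempty and contained in {z}
        have hd : (t' \ S).card = 1 := by omega
        obtain ⟨l0, hl0⟩ := card_eq_one.1 hd
        have hl0m : l0 ∈ t' \ S := hl0 ▸ mem_singleton_self l0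
        have : l0 = z := mem_singleton.1 (hsub' hl0m)
        exact (mem_sdiff.1 hl0m).2 (this ▸ h ▸ hv0)
      have hallz : ∀ w ∈ s, G.Adj v0 w → w = z := by
        intro w hw hadj
        by_cases hwt : w ∈ t'
        · by_cases hwS : w ∈ S
          · have : w = v0 := by rw [hv0eq] at hwS; exact mem_singleton.1 hwS
            exact absurd (this ▸ hadj) (G.irrefl)
          · exact hleafz w hwt hwS
        · exact absurd (hcr v0 (hSsub hv0) w hw hwt hadj) (Ne.symm hzv0)
      obtain ⟨a, ha, b, hb, hva, hvb, hab⟩ := hdeg2 v0 (ht's (hSsub hv0))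
      exact hab ((hallz a ha hva).trans (hallz b hb hvb).symm)
    have hcross_t2 : ∀ p ∈ t2, ∀ q ∈ s, q ∉ t2 → G.Adj p q → p = b0 := by
      intro p hp q hq hq2 hadj
      have hqt : q ∈ t := by
        by_contra h
        exact hq2 (mem_sdiff.2 ⟨hq, h⟩)
      exact (hcross q hqt p (ht2sub hp) (mem_sdiff.1 hp).2 hadj.symm).2
    have hC4t : C4S G t := by
      rcases ih G t (by omega) hconn_t hgamt hcard_t with h | h
      · exact h
      · exact absurd h (fun hC => killCor t a0 htsub ha0t
          (fun p hp q hq hqt hadj => (hcross p hp q hq hqt hadj).1) hC)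
    have hC4t2 : C4S G t2 := by
      rcases ih G t2 (by omega) hconn_t2 hgamt2 hcard_t2 with h | h
      · exact h
      · exact absurd h (fun hC => killCor t2 b0 ht2sub hb0t2 hcross_t2 hC)
    -- two C4s joined by a bridge: dominating set of size 3
    obtain ⟨w1, hw1, hw1opp⟩ := C4S_opp hC4t ha0t
    obtain ⟨w2, hw2, hw2opp⟩ := C4S_opp hC4t2 hb0t2
    have hdomD : Dom G s {a0, w1, w2} := by
      constructor
      · intro w hw
        rcases mem_insert.1 hw with rfl | hw
        · exact ha0s
        rcases mem_insert.1 hw with rfl | hw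
        · exact htsub hw1
        · exact ht2sub ((mem_singleton.1 hw) ▸ hw2)
      · intro v hv hv'
        by_cases hvt : v ∈ t
        · rcases hw1opp v hvt with rfl | rfl | hadj
          · exact absurd (mem_insert_self _ _) hv'
          · exact absurd (mem_insert.2 (Or.inr (mem_insert_self _ _))) hv'
          · exact ⟨w1, mem_insert.2 (Or.inr (mem_insert_self _ _)), hadj⟩
        · have hvt2 : v ∈ t2 := mem_sdiff.2 ⟨hv, hvt⟩
          rcases hw2opp v hvt2 with rfl | rfl | hadj
          · exact ⟨a0, mem_insert_self _ _, hab0adj⟩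
          · exact absurd (mem_insert.2 (Or.inr (mem_insert.2 (Or.inr (mem_singleton_self _))))) hv'
          · exact ⟨w2, mem_insert.2 (Or.inr (mem_insert.2 (Or.inr (mem_singleton_self _)))), hadj⟩
    have hgle := gam_le hdomD
    have hcard3 : ({a0, w1, w2} : Finset V).card ≤ 3 := by
      calc ({a0, w1, w2} : Finset V).card ≤ ({w1, w2} : Finset V).card + 1 := card_insert_le _ _
        _ ≤ ({w2} : Finset V).card + 1 + 1 := Nat.add_le_add_right (card_insert_le _ _) 1
        _ ≤ 3 := by simp
    have hc4a : t.card = 4 := C4S_card hC4t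
    have hc4b : t2.card = 4 := C4S_card hC4t2
    omega

theorem keyTheorem : ∀ (N : ℕ) (G : SimpleGraph V) (s : Finset V),
    s.card + (edgesIn G s).card ≤ N → ConnIn G s → 2 * gam G s = s.card → 2 ≤ s.card →
    C4S G s ∨ CorS G s := by
  intro N
  induction N with
  | zero => intro G s h hc hg h2; omega
  | succ N ih =>
    intro G s hN hconn hgam h2
    by_cases hleaf : ∃ x ∈ s, ∃ u ∈ s, G.Adj u x ∧ ∀ w ∈ s, G.Adj w x → w = u
    · obtain ⟨x, hx, u, hu, hadj, huniq⟩ := hleaf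
      exact Or.inr (caseA ih hN hconn hgam h2 hx hu hadj huniq)
    · push_neg at hleaf
      exact caseB ih hN hconn hgam h2 hleaf

lemma domNum_eq_gam (G : SimpleGraph V) : domNum G = gam G univ := by
  unfold domNum gam
  congr 1
  ext n
  simp only [Set.mem_setOf_eq]
  constructor
  · rintro ⟨D, hD, rfl⟩
    exact ⟨D, ⟨subset_univ D, fun v _ hv => hD v hv⟩, rfl⟩
  · rintro ⟨D, hD, rfl⟩
    exact ⟨D, fun v hv => hD.2 v (mem_univ v) hv, rfl⟩

lemma connIn_univ {G : SimpleGraph V} (h : G.Connected) : ConnIn G univ := by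
  haveI : Nonempty V := h.nonempty
  refine ⟨univ_nonempty, fun a _ b _ => ?_⟩
  have := (SimpleGraph.reachable_iff_reflTransGen a b).1 (h.preconnected a b)
  exact Relation.ReflTransGen.mono (fun x y hxy => ⟨mem_univ x, mem_univ y, hxy⟩) _ _ this

/-- the C4 structure gives an isomorphism with the cycle graph -/
lemma C4S_iso {G : SimpleGraph V} (h : C4S G univ) :
    Nonempty (G ≃g SimpleGraph.cycleGraph 4) := by
  classical
  obtain ⟨a, b, c, d, hseq, hac, hbd, hab, hbc, hcd, hda, hnac, hnbd⟩ := h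
  have hmem : ∀ v : V, v = a ∨ v = b ∨ v = c ∨ v = d := by
    intro v
    have : v ∈ ({a, b, c, d} : Finset V) := hseq ▸ mem_univ v
    simpa using this
  have hba : b ≠ a := hab.ne'
  have hca : c ≠ a := fun h => hac h.symm
  have hcb : c ≠ b := hbc.ne'
  have hdaa : d ≠ a := hda.ne
  have hdb : d ≠ b := fun h => hbd h.symm
  have hdc : d ≠ c := hcd.ne'
  set e : V → Fin 4 := fun v => if v = a then 0 else if v = b then 1 else if v = c then 2 else 3
    with he
  have ea : e a = 0 := by simp [he]
  have eb : e b = 1 := by simp [he, hba]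
  have ec : e c = 2 := by simp [he, hca, hcb]
  have ed : e d = 3 := by simp [he, hdaa, hdb, hdc]
  have hinj : Function.Injective e := by
    intro v w hvw
    rcases hmem v with rfl | rfl | rfl | rfl <;> rcases hmem w with rfl | rfl | rfl | rfl <;>
      first
        | rfl
        | (rw [ea, eb] at hvw; exact absurd hvw (by decide))
        | (rw [ea, ec] at hvw; exact absurd hvw (by decide))
        | (rw [ea, ed] at hvw; exact absurd hvw (by decide))
        | (rw [eb, ea] at hvw; exact absurd hvw (by decide))
        | (rw [eb, ec] at hvw; exact absurd hvw (by decide))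
        | (rw [eb, ed] at hvw; exact absurd hvw (by decide))
        | (rw [ec, ea] at hvw; exact absurd hvw (by decide))
        | (rw [ec, eb] at hvw; exact absurd hvw (by decide))
        | (rw [ec, ed] at hvw; exact absurd hvw (by decide))
        | (rw [ed, ea] at hvw; exact absurd hvw (by decide))
        | (rw [ed, eb] at hvw; exact absurd hvw (by decide))
        | (rw [ed, ec] at hvw; exact absurd hvw (by decide))
  have h4 : ∀ i : Fin 4, i = 0 ∨ i = 1 ∨ i = 2 ∨ i = 3 := by decide
  have hsurjE : Function.Surjective e := by
    intro i
    rcases h4 i with rfl | rfl | rfl | rfl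
    exacts [⟨a, ea⟩, ⟨b, eb⟩, ⟨c, ec⟩, ⟨d, ed⟩]
  refine ⟨RelIso.mk (Equiv.ofBijective e ⟨hinj, hsurjE⟩) ?_⟩
  intro u v
  show (SimpleGraph.cycleGraph 4).Adj (e u) (e v) ↔ G.Adj u v
  rcases hmem u with rfl | rfl | rfl | rfl <;> rcases hmem v with rfl | rfl | rfl | rfl
  · rw [ea]; exact ⟨fun h => absurd h (by decide), fun h => absurd h (G.irrefl)⟩
  · rw [ea, eb]; exact ⟨fun _ => hab, fun _ => by decide⟩
  · rw [ea, ec]; exact ⟨fun h => absurd h (by decide), fun h => absurd h hnac⟩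
  · rw [ea, ed]; exact ⟨fun _ => hda.symm, fun _ => by decide⟩
  · rw [eb, ea]; exact ⟨fun _ => hab.symm, fun _ => by decide⟩
  · rw [eb]; exact ⟨fun h => absurd h (by decide), fun h => absurd h (G.irrefl)⟩
  · rw [eb, ec]; exact ⟨fun _ => hbc, fun _ => by decide⟩
  · rw [eb, ed]; exact ⟨fun h => absurd h (by decide), fun h => absurd h hnbd⟩
  · rw [ec, ea]; exact ⟨fun h => absurd h (by decide), fun h => absurd h (fun h' => hnac h'.symm)⟩
  · rw [ec, eb]; exact ⟨fun _ => hbc.symm, fun _ => by decide⟩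
  · rw [ec]; exact ⟨fun h => absurd h (by decide), fun h => absurd h (G.irrefl)⟩
  · rw [ec, ed]; exact ⟨fun _ => hcd, fun _ => by decide⟩
  · rw [ed, ea]; exact ⟨fun _ => hda, fun _ => by decide⟩
  · rw [ed, eb]; exact ⟨fun h => absurd h (by decide), fun h => absurd h (fun h' => hnbd h'.symm)⟩
  · rw [ed, ec]; exact ⟨fun _ => hcd.symm, fun _ => by decide⟩
  · rw [ed]; exact ⟨fun h => absurd h (by decide), fun h => absurd h (G.irrefl)⟩

/-- the corona structure gives an isomorphism with a corona -/
lemma CorS_corona {G : SimpleGraph V} {A B : Finset V} (hbip : IsBipartition G A B)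
    (h : CorS G univ) :
    ∃ (W : Type) (F : SimpleGraph W),
      F.Connected ∧ F.Colorable 2 ∧ Nonempty (G ≃g corona F) := by
  classical
  obtain ⟨S, f, hSsub, hSconn, hleaf, hinj, hsurj⟩ := h
  refine ⟨{v : V // v ∈ S}, SimpleGraph.comap (fun w => (w : V)) G, ?_, ?_, ?_⟩
  · -- connected
    rw [SimpleGraph.connected_iff]
    obtain ⟨u0, hu0⟩ := hSconn.1
    refine ⟨?_, ⟨⟨u0, hu0⟩⟩⟩
    intro p q
    obtain ⟨a, ha⟩ := p
    obtain ⟨b, hb⟩ := q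
    have hr : ∀ b', ReachIn G S a b' → ∀ hb' : b' ∈ S,
        (SimpleGraph.comap (fun w : {v : V // v ∈ S} => (w : V)) G).Reachable ⟨a, ha⟩ ⟨b', hb'⟩ := by
      intro b' hreach
      induction hreach with
      | refl => intro _; exact SimpleGraph.Reachable.refl _
      | @tail m c h1 h2 ihh =>
        intro hc
        refine SimpleGraph.Reachable.trans (ihh h2.1) ?_
        exact SimpleGraph.Adj.reachable (SimpleGraph.comap_adj.2 h2.2.2)
    exact hr b (hSconn.2 a ha b hb) hb
  · -- 2-colorable
    refine ⟨SimpleGraph.Coloring.mk (fun w => if (w : V) ∈ A then (0 : Fin 2) else 1) ?_⟩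
    intro v w hadj
    have hGadj : G.Adj (v : V) (w : V) := SimpleGraph.comap_adj.1 hadj
    rcases hbip.2.2 hGadj with ⟨h1, h2⟩ | ⟨h1, h2⟩
    · have hw : (w : V) ∉ A := fun hw => (Finset.disjoint_left.1 hbip.2.1) hw h2
      simp [h1, hw]
    · have hv : (v : V) ∉ A := fun hv => (Finset.disjoint_left.1 hbip.2.1) hv h1
      simp [hv, h2]
  · -- isomorphism
    have hsup0 : ∀ v : V, ∃ p, v ∉ S → (p ∈ S ∧ f p = v) := by
      intro v
      by_cases hv : v ∈ S
      · exact ⟨v, fun h => absurd hv h⟩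
      · obtain ⟨p, hp, hfp⟩ := hsurj v (mem_univ v) hv
        exact ⟨p, fun _ => ⟨hp, hfp⟩⟩
    choose sup hsup using hsup0
    set g : V → ({v : V // v ∈ S} ⊕ {v : V // v ∈ S}) := fun v =>
      if h : v ∈ S then Sum.inl ⟨v, h⟩ else Sum.inr ⟨sup v, (hsup v h).1⟩ with hg
    have hgS : ∀ v (h : v ∈ S), g v = Sum.inl ⟨v, h⟩ := fun v h => dif_pos h
    have hgL : ∀ v (h : v ∉ S), g v = Sum.inr ⟨sup v, (hsup v h).1⟩ := fun v h => dif_neg h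
    have hginj : Function.Injective g := by
      intro v w hvw
      by_cases hv : v ∈ S <;> by_cases hw : w ∈ S
      · rw [hgS v hv, hgS w hw] at hvw
        exact Subtype.ext_iff.1 (Sum.inl.inj hvw)
      · rw [hgS v hv, hgL w hw] at hvw
        exact absurd hvw (by simp)
      · rw [hgL v hv, hgS w hw] at hvw
        exact absurd hvw (by simp)
      · rw [hgL v hv, hgL w hw] at hvw
        have h1 : sup v = sup w := Subtype.ext_iff.1 (Sum.inr.inj hvw)
        have h2 := (hsup v hv).2
        have h3 := (hsup w hw).2
        rw [← h2, ← h3, h1]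
    have hgsurj : Function.Surjective g := by
      rintro (⟨p, hp⟩ | ⟨p, hp⟩)
      · exact ⟨p, hgS p hp⟩
      · refine ⟨f p, ?_⟩
        have hfpS : f p ∉ S := (hleaf p hp).2.1
        rw [hgL (f p) hfpS]
        congr 1
        have h2 := (hsup (f p) hfpS)
        exact Subtype.ext (hinj _ h2.1 p hp h2.2)
    refine ⟨RelIso.mk (Equiv.ofBijective g ⟨hginj, hgsurj⟩) ?_⟩
    intro u v
    show (corona _).Adj (g u) (g v) ↔ G.Adj u v
    by_cases hu : u ∈ S <;> by_cases hv : v ∈ S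
    · rw [hgS u hu, hgS v hv]
      exact Iff.rfl
    · rw [hgS u hu, hgL v hv]
      constructor
      · intro h
        have h1 : (⟨u, hu⟩ : {v : V // v ∈ S}) = ⟨sup v, (hsup v hv).1⟩ := h
        have h2 : u = sup v := Subtype.ext_iff.1 h1
        have h3 := (hsup v hv).2
        have hadj : G.Adj (sup v) (f (sup v)) := (hleaf (sup v) (hsup v hv).1).2.2.1
        rw [h3] at hadj
        rw [h2]
        exact hadj
      · intro h
        have h2 := hsup v hv
        have h3 : u = sup v := (hleaf (sup v) h2.1).2.2.2 u (mem_univ u) (by rw [h2.2]; exact h)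
        show (⟨u, hu⟩ : {v : V // v ∈ S}) = ⟨sup v, h2.1⟩
        exact Subtype.ext h3
    · rw [hgL u hu, hgS v hv]
      constructor
      · intro h
        have h1 : (⟨sup u, (hsup u hu).1⟩ : {v : V // v ∈ S}) = ⟨v, hv⟩ := h
        have h2 : sup u = v := Subtype.ext_iff.1 h1
        have h3 := (hsup u hu).2
        have hadj : G.Adj (sup u) u := by
          have := (hleaf (sup u) (hsup u hu).1).2.2.1
          rwa [h3] at this
        exact h2 ▸ hadj.symm
      · intro h
        have h2 := hsup u hu
        have h3 : v = sup u := (hleaf (sup u) h2.1).2.2.2 v (mem_univ v)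
          (by rw [h2.2]; exact h.symm)
        show (⟨sup u, h2.1⟩ : {v : V // v ∈ S}) = ⟨v, hv⟩
        exact Subtype.ext h3.symm
    · rw [hgL u hu, hgL v hv]
      constructor
      · intro h
        exact h.elim
      · intro h
        have h2 := hsup v hv
        have h3 : u = sup v := (hleaf (sup v) h2.1).2.2.2 u (mem_univ u) (by rw [h2.2]; exact h)
        exact (hu (h3 ▸ h2.1)).elim

/-- domination number of a graph isomorphic to the 4-cycle -/
lemma backward_c4 {G : SimpleGraph V} (e : G ≃g SimpleGraph.cycleGraph 4) :
    domNum G = 2 ∧ Fintype.card V = 4 := by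
  classical
  have hcard : Fintype.card V = 4 := by
    rw [Fintype.card_congr e.toEquiv, Fintype.card_fin]
  have hadj01 : ∀ i : Fin 4, i ≠ 0 → i ≠ 2 → (SimpleGraph.cycleGraph 4).Adj 0 i := by decide
  have hsymm02 : (0 : Fin 4) ≠ 2 := by decide
  -- upper bound : {e.symm 0, e.symm 2} dominates
  have hDdom : IsDomSet G {e.symm 0, e.symm 2} := by
    intro v hv
    have h0 : e v ≠ 0 := by
      intro h
      have : v = e.symm 0 := by rw [← h, RelIso.symm_apply_apply]
      exact hv (this ▸ mem_insert_self _ _)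
    have h2 : e v ≠ 2 := by
      intro h
      have : v = e.symm 2 := by rw [← h, RelIso.symm_apply_apply]
      exact hv (this ▸ mem_insert.2 (Or.inr (mem_singleton_self _)))
    refine ⟨e.symm 0, mem_insert_self _ _, ?_⟩
    have := hadj01 (e v) h0 h2
    rw [← RelIso.apply_symm_apply e 0] at this
    exact (SimpleGraph.Iso.map_adj_iff e).1 this
  have hDcard : ({e.symm 0, e.symm 2} : Finset V).card = 2 :=
    card_pair (fun h => hsymm02 (e.symm.injective h))
  -- lower bound
  have hlower : ∀ D : Finset V, IsDomSet G D → 2 ≤ D.card := by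
    intro D hD
    by_contra hlt
    push_neg at hlt
    have hD1 : D.card ≤ 1 := by omega
    have hDne : D.Nonempty := by
      rcases D.eq_empty_or_nonempty with rfl | h
      · obtain ⟨u, hu, _⟩ := hD (e.symm 0) (notMem_empty _)
        exact absurd hu (notMem_empty u)
      · exact h
    have hcard1 : D.card = 1 := le_antisymm hD1 (card_pos.2 hDne)
    obtain ⟨v0, hv0⟩ := card_eq_one.1 hcard1
    set z := e.symm (e v0 + 2) with hz
    have hzv0 : z ≠ v0 := by
      intro h
      have : e v0 + 2 = e v0 := by
        conv_rhs => rw [← h, hz, RelIso.apply_symm_apply]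
      revert this
      generalize e v0 = i
      revert i
      decide
    have hzD : z ∉ D := by rw [hv0]; simpa using hzv0
    obtain ⟨u, hu, hadj⟩ := hD z hzD
    have huv0 : u = v0 := by rw [hv0] at hu; exact mem_singleton.1 hu
    subst huv0
    have : (SimpleGraph.cycleGraph 4).Adj (e u) (e z) := (SimpleGraph.Iso.map_adj_iff e).2 hadj
    rw [hz, RelIso.apply_symm_apply] at this
    revert this
    generalize e u = i
    revert i
    decide
  constructor
  · refine le_antisymm (Nat.sInf_le ⟨_, hDdom, hDcard⟩) ?_
    refine le_csInf ⟨2, _, hDdom, hDcard⟩ ?_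
    rintro n ⟨D, hDdom', rfl⟩
    exact hlower D hDdom'
  · exact hcard

/-- domination number of a graph isomorphic to a corona -/
lemma backward_corona {G : SimpleGraph V} {W : Type} {F : SimpleGraph W}
    (e : G ≃g corona F) : ∃ k, domNum G = k ∧ Fintype.card V = 2 * k := by
  classical
  haveI fintW : Fintype W := Fintype.ofInjective (fun w : W => e.symm (Sum.inl w))
    (fun w w' h => Sum.inl_injective (e.symm.injective h))
  refine ⟨Fintype.card W, ?_, ?_⟩
  · -- domNum G = card W
    have hupper : IsDomSet G ((univ : Finset W).image (fun w => e.symm (Sum.inl w))) := by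
      intro v hv
      rcases h : e v with w | w
      · exfalso
        have : v = e.symm (Sum.inl w) := by rw [← h, RelIso.symm_apply_apply]
        exact hv (this ▸ Finset.mem_image.2 ⟨w, mem_univ w, rfl⟩)
      · refine ⟨e.symm (Sum.inl w), Finset.mem_image.2 ⟨w, mem_univ w, rfl⟩, ?_⟩
        have hadj : (corona F).Adj (Sum.inl w) (Sum.inr w) := rfl
        rw [← h] at hadj
        rw [← RelIso.apply_symm_apply e (Sum.inl w)] at hadj
        exact (SimpleGraph.Iso.map_adj_iff e).1 hadj
    have hucard : ((univ : Finset W).image (fun w => e.symm (Sum.inl w))).card =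
        Fintype.card W := by
      rw [Finset.card_image_of_injective _
        (fun w w' h => Sum.inl_injective (e.symm.injective h)), card_univ]
    have hlower : ∀ D : Finset V, IsDomSet G D → Fintype.card W ≤ D.card := by
      intro D hD
      set φ : W → V := fun w =>
        if e.symm (Sum.inl w) ∈ D then e.symm (Sum.inl w) else e.symm (Sum.inr w) with hφ
      have hφD : ∀ w, φ w ∈ D := by
        intro w
        by_cases h : e.symm (Sum.inl w) ∈ D
        · rw [hφ]; simpa [h] using h
        · rw [hφ]
          simp only [if_neg h]
          by_contra hcon
          obtain ⟨u, hu, hadj⟩ := hD (e.symm (Sum.inr w)) hcon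
          have : (corona F).Adj (e u) (Sum.inr w) := by
            have := (SimpleGraph.Iso.map_adj_iff e).2 hadj
            rwa [RelIso.apply_symm_apply] at this
          rcases h2 : e u with w' | w'
          · rw [h2] at this
            have hww : w' = w := this
            have : u = e.symm (Sum.inl w) := by
              rw [← hww, ← h2, RelIso.symm_apply_apply]
            exact h (this ▸ hu)
          · rw [h2] at this
            exact this.elim
      have hφinj : Set.InjOn φ ↑(univ : Finset W) := by
        intro w _ w' _ hww
        rw [hφ] at hww
        simp only at hww
        by_cases h1 : e.symm (Sum.inl w) ∈ D <;> by_cases h2 : e.symm (Sum.inl w') ∈ D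
        · rw [if_pos h1, if_pos h2] at hww
          exact Sum.inl_injective (e.symm.injective hww)
        · rw [if_pos h1, if_neg h2] at hww
          exact absurd (e.symm.injective hww) (by simp)
        · rw [if_neg h1, if_pos h2] at hww
          exact absurd (e.symm.injective hww) (by simp)
        · rw [if_neg h1, if_neg h2] at hww
          exact Sum.inr_injective (e.symm.injective hww)
      calc Fintype.card W = (univ : Finset W).card := card_univ.symm
        _ ≤ D.card := Finset.card_le_card_of_injOn φ (fun w _ => hφD w) hφinj
    refine le_antisymm (Nat.sInf_le ⟨_, hupper, hucard⟩) ?_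
    refine le_csInf ⟨Fintype.card W, _, hupper, hucard⟩ ?_
    rintro n ⟨D, hDdom', rfl⟩
    exact hlower D hDdom'
  · rw [Fintype.card_congr e.toEquiv, Fintype.card_sum]
    omega

theorem domNum_eq_half_iff_cycle_or_corona (G : SimpleGraph V)
    (A B : Finset V) (hconn : G.Connected) (hbip : IsBipartition G A B)
    (hA : 1 ≤ A.card) (hAB : A.card = B.card) :
    domNum G = A.card ↔
      (Nonempty (G ≃g SimpleGraph.cycleGraph 4) ∨
        ∃ (W : Type) (F : SimpleGraph W),
          F.Connected ∧ F.Colorable 2 ∧ Nonempty (G ≃g corona F)) := by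
  classical
  have hcardU : (univ : Finset V).card = 2 * A.card := by
    rw [← hbip.1, card_union_of_disjoint hbip.2.1]
    omega
  constructor
  · intro hdom
    have hgamU : 2 * gam G univ = (univ : Finset V).card := by
      rw [← domNum_eq_gam, hdom]
      omega
    have h2 : 2 ≤ (univ : Finset V).card := by omega
    rcases keyTheorem ((univ : Finset V).card + (edgesIn G univ).card) G univ le_rfl
      (connIn_univ hconn) hgamU h2 with h | h
    · exact Or.inl (C4S_iso h)
    · exact Or.inr (CorS_corona hbip h)
  · intro h
    have hcardV : Fintype.card V = 2 * A.card := by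
      rw [← Finset.card_univ]
      exact hcardU
    rcases h with he | ⟨W, F, _, _, he⟩
    · obtain ⟨e⟩ := he
      obtain ⟨hd, hc⟩ := backward_c4 e
      omega
    · obtain ⟨e⟩ := he
      obtain ⟨k, hd, hc⟩ := backward_corona e
      omega
end
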